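/- Let τ = τ1·a1·τ2 be an SC computation of a parallel program P such that a1 hb* a2 for every action a2 in τ2, and suppose τ·a is also an SC computation of P. Then a1 hb* a in Tr(τ·a) if and only if (i) some action in a1·τ2 belongs to the same thread as a, or (ii) a is a load whose address is stored by some action in a1·τ2, or (iii) a is a store (with its issue) whose address is loaded or stored by some action in a1·τ2. -/

import Mathlib

set_option maxHeartbeats 1000000
set_option linter.unusedVariables false

namespace TSORob

attribute [local instance 10] Classical.propDecidable

noncomputable section

variable {Tid Lbl D : Type}

/-! ### Actions -/

/-- Actions: issue, store, load, and local actions (the latter covering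
assignments, asserts and fences). -/
inductive Act (Tid D : Type) : Type where
  | issue (t : Tid)
  | store (t : Tid) (a v : D)
  | load  (t : Tid) (a v : D)
  | loc   (t : Tid)

namespace Act

def thread : Act Tid D → Tid
  | .issue t => t
  | .store t _ _ => t
  | .load t _ _ => t
  | .loc t => t

def isStore : Act Tid D → Prop
  | .store _ _ _ => True
  | _ => False

def isIssue : Act Tid D → Prop
  | .issue _ => True
  | _ => False

def isLoad : Act Tid D → Prop
  | .load _ _ _ => True
  | _ => False

end Act

/-! ### Positions, matching of issues and stores, trace nodes -/

/-- Number of actions satisfying `p` among the first `i` actions of `τ`. -/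
def cntP (τ : List (Act Tid D)) (p : Act Tid D → Prop) (i : ℕ) : ℕ :=
  ((τ.take i).filter fun a => decide (p a)).length

/-- Position of the `k`-th (0-based) action of `τ` satisfying `p`. -/
def posOfNth (τ : List (Act Tid D)) (p : Act Tid D → Prop) (k : ℕ) : Option ℕ :=
  ((List.range τ.length).filter fun i => decide (∃ a, τ[i]? = some a ∧ p a))[k]?

def isStoreOf (t : Tid) (x : Act Tid D) : Prop := x.isStore ∧ x.thread = t
def isIssueOf (t : Tid) (x : Act Tid D) : Prop := x.isIssue ∧ x.thread = t

/-- Position of the issue action corresponding to the store action at position `j`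
(the `k`-th store action of a thread corresponds to its `k`-th issue action, as
buffers are FIFO). -/
def issueOfStore (τ : List (Act Tid D)) (j : ℕ) : Option ℕ :=
  match τ[j]? with
  | some (.store t _ _) => posOfNth τ (isIssueOf t) (cntP τ (isStoreOf t) j)
  | _ => none

/-- Position of the store action corresponding to the issue action at position `i`. -/
def storeOfIssue (τ : List (Act Tid D)) (i : ℕ) : Option ℕ :=
  match τ[i]? with
  | some (.issue t) => posOfNth τ (isStoreOf t) (cntP τ (isIssueOf t) i)
  | _ => none

/-- Rank of the action at position `i` among non-store actions of its thread.
In the trace, an issue and its store form one node; nodes of a thread are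
identified by this rank. -/
def rankAt (τ : List (Act Tid D)) (i : ℕ) : ℕ :=
  match τ[i]? with
  | some a => cntP τ (fun x => x.thread = a.thread ∧ ¬ x.isStore) i
  | none => 0

/-- The trace node corresponding to the action at position `i` of `τ`: a pair of
the thread and the rank of the node in the thread's program order. A store
action yields the node of its issue action. -/
def nodeAt (τ : List (Act Tid D)) (i : ℕ) : Option (Tid × ℕ) :=
  match τ[i]? with
  | some (.store t _ _) => (issueOfStore τ i).map fun p => (t, rankAt τ p)
  | some a => some (a.thread, rankAt τ i)
  | none => none

/-- Relabel the issue actions of a per-thread action sequence by the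
corresponding store actions (given in FIFO order) and drop the store actions:
this yields the per-thread node labels of the trace. -/
def mergeStores : List (Act Tid D) → List (Act Tid D) → List (Act Tid D)
  | [], _ => []
  | .issue t :: rest, stores => stores.headD (.issue t) :: mergeStores rest stores.tail
  | .store _ _ _ :: rest, stores => mergeStores rest stores
  | .load t a v :: rest, stores => .load t a v :: mergeStores rest stores
  | .loc t :: rest, stores => .loc t :: mergeStores rest stores

/-- The sequence of node labels of thread `t` in the trace of `τ`. -/
def threadNodes (τ : List (Act Tid D)) (t : Tid) : List (Act Tid D) :=
  mergeStores (τ.filter fun a => decide (a.thread = t)) (τ.filter fun a => decide (isStoreOf t a))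

/-! ### Traces -/

/-- A trace: per-thread node labels (program order is the per-thread order of
issuing, i.e. the order of the lists), a store order `so` and a source
relation `src` on nodes.  A node is a pair (thread, rank in the thread). -/
structure Trace (Tid D : Type) where
  lab : Tid → List (Act Tid D)
  so : Tid × ℕ → Tid × ℕ → Prop
  src : Tid × ℕ → Tid × ℕ → Prop

namespace Trace

def labAt (T : Trace Tid D) (n : Tid × ℕ) : Option (Act Tid D) := (T.lab n.1)[n.2]?

/-- Program order: per-thread total order in which actions were issued. -/
def po (T : Trace Tid D) (m n : Tid × ℕ) : Prop :=
  m.1 = n.1 ∧ m.2 < n.2 ∧ n.2 < (T.lab n.1).length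

/-- Conflict relation: a load conflicts with a store that overwrites the value
the load reads (including the case where the load reads the initial value). -/
def cf (T : Trace Tid D) (m n : Tid × ℕ) : Prop :=
  ∃ a, (∃ t v, T.labAt m = some (.load t a v)) ∧ (∃ t v, T.labAt n = some (.store t a v)) ∧
    ((∃ p, T.src p m ∧ T.so p n) ∨ ¬ ∃ p, T.src p m)

/-- The happens-before relation `hb = po ∪ so ∪ src ∪ cf`. -/
def hb (T : Trace Tid D) (m n : Tid × ℕ) : Prop :=
  T.po m n ∨ T.so m n ∨ T.src m n ∨ T.cf m n

/-- Acyclicity of a relation. -/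
def Acyclic (r : α → α → Prop) : Prop := ¬ ∃ x, Relation.TransGen r x x

end Trace

/-- Store order of a computation: per-address total order of the store actions. -/
def soRel (τ : List (Act Tid D)) (m n : Tid × ℕ) : Prop :=
  ∃ i j a, i < j ∧ (∃ t v, τ[i]? = some (.store t a v)) ∧ (∃ t v, τ[j]? = some (.store t a v)) ∧
    nodeAt τ i = some m ∧ nodeAt τ j = some n

/-- At position `p`, position `i` is a pending (issued but not yet flushed)
issue of thread `t` with address `a`. -/
def pendingIssue (τ : List (Act Tid D)) (t : Tid) (a : D) (p i : ℕ) : Prop :=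
  i < p ∧ τ[i]? = some (Act.issue t) ∧
  ∃ j v, storeOfIssue τ i = some j ∧ p < j ∧ τ[j]? = some (.store t a v)

/-- Source relation of a computation: each load reads either (early) from the
latest pending buffered store of its own thread to its address, or else from
the latest store action to its address that was flushed to memory before it. -/
def srcRel (τ : List (Act Tid D)) (m n : Tid × ℕ) : Prop :=
  ∃ p t a v, τ[p]? = some (.load t a v) ∧ nodeAt τ p = some n ∧
    ((∃ i, pendingIssue τ t a p i ∧ (∀ i', pendingIssue τ t a p i' → i' ≤ i) ∧
        nodeAt τ i = some m) ∨
     ((¬ ∃ i, pendingIssue τ t a p i) ∧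
      ∃ j, j < p ∧ (∃ t' v', τ[j]? = some (.store t' a v')) ∧
        (∀ j', j' < p → (∃ t' v', τ[j']? = some (.store t' a v')) → j' ≤ j) ∧
        nodeAt τ j = some m))

/-- The trace of a computation. -/
def traceOf (τ : List (Act Tid D)) : Trace Tid D :=
  ⟨fun t => threadNodes τ t, soRel τ, srcRel τ⟩


/-- Instructions: loads, stores, memory fences, local assignments, asserts
(and atomic test-and-set, i.e. a locked instruction).  Expressions are
functions of the register valuation. -/
inductive Instr (D : Type) : Type where
  | load   (r : ℕ) (ae : (ℕ → D) → D)
  | store  (ae ve : (ℕ → D) → D)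
  | mfence
  | assign (r : ℕ) (e : (ℕ → D) → D)
  | assert (e : (ℕ → D) → D)
  | tas    (r : ℕ) (ae ve : (ℕ → D) → D)

/-- A labelled instruction `l : instr; goto l'`. -/
structure LInstr (Lbl D : Type) : Type where
  src : Lbl
  ins : Instr D
  dst : Lbl

/-- A thread: declared registers `0, …, nregs-1`, an initial label, and a
finite list of labelled instructions (several instructions may share a label,
giving branching). -/
structure ThreadCode (Lbl D : Type) : Type where
  nregs : ℕ
  init : Lbl
  code : List (LInstr Lbl D)

/-- A parallel program: a finite family of threads. -/
structure Program (Tid Lbl D : Type) : Type where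
  threads : Tid → ThreadCode Lbl D

/-! ### TSO semantics -/

/-- A TSO configuration: program counters, memory, per-thread registers and
per-thread FIFO store buffers of address–value pairs. -/
structure Conf (Tid Lbl D : Type) : Type where
  pc : Tid → Lbl
  mem : D → D
  regs : Tid → ℕ → D
  buf : Tid → List (D × D)

/-- Pointwise function update. -/
def updf {α β : Type _} (f : α → β) (x : α) (b : β) : α → β :=
  fun y => if y = x then b else f y

/-- The value for address `a` held by the latest buffered store in `β`, if any. -/
def bufVal (β : List (D × D)) (a : D) : Option D :=
  ((β.filter fun p => decide (p.1 = a)).getLast?).map Prod.snd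

/-- The initial configuration: initial labels, all registers and addresses
hold `0`, all buffers are empty. -/
def initConf [Zero D] (P : Program Tid Lbl D) : Conf Tid Lbl D :=
  ⟨fun t => (P.threads t).init, fun _ => 0, fun _ _ => 0, fun _ => []⟩

/-- Events: actions annotated with the instruction that generated them
(flushes of the buffer carry no instruction). -/
abbrev Ev (Tid Lbl D : Type) : Type := Act Tid D × Option (LInstr Lbl D)

/-- The TSO transition relation.  A step emits a list of events. -/
inductive Step [Zero D] (P : Program Tid Lbl D) :
    Conf Tid Lbl D → List (Ev Tid Lbl D) → Conf Tid Lbl D → Prop where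
  | loadBuf (c : Conf Tid Lbl D) (t : Tid) (li : LInstr Lbl D) (r : ℕ)
      (ae : (ℕ → D) → D) (a v : D) :
      li ∈ (P.threads t).code → c.pc t = li.src → li.ins = .load r ae →
      a = ae (c.regs t) → bufVal (c.buf t) a = some v →
      Step P c [(.load t a v, some li)]
        ⟨updf c.pc t li.dst, c.mem, updf c.regs t (updf (c.regs t) r v), c.buf⟩
  | loadMem (c : Conf Tid Lbl D) (t : Tid) (li : LInstr Lbl D) (r : ℕ)
      (ae : (ℕ → D) → D) (a v : D) :
      li ∈ (P.threads t).code → c.pc t = li.src → li.ins = .load r ae →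
      a = ae (c.regs t) → bufVal (c.buf t) a = none → v = c.mem a →
      Step P c [(.load t a v, some li)]
        ⟨updf c.pc t li.dst, c.mem, updf c.regs t (updf (c.regs t) r v), c.buf⟩
  | storeIssue (c : Conf Tid Lbl D) (t : Tid) (li : LInstr Lbl D)
      (ae ve : (ℕ → D) → D) (a v : D) :
      li ∈ (P.threads t).code → c.pc t = li.src → li.ins = .store ae ve →
      a = ae (c.regs t) → v = ve (c.regs t) →
      Step P c [(.issue t, some li)]
        ⟨updf c.pc t li.dst, c.mem, c.regs, updf c.buf t (c.buf t ++ [(a, v)])⟩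
  | flush (c : Conf Tid Lbl D) (t : Tid) (a v : D) (β : List (D × D)) :
      c.buf t = (a, v) :: β →
      Step P c [(.store t a v, none)]
        ⟨c.pc, updf c.mem a v, c.regs, updf c.buf t β⟩
  | fence (c : Conf Tid Lbl D) (t : Tid) (li : LInstr Lbl D) :
      li ∈ (P.threads t).code → c.pc t = li.src → li.ins = .mfence →
      c.buf t = [] →
      Step P c [(.loc t, some li)] ⟨updf c.pc t li.dst, c.mem, c.regs, c.buf⟩
  | assign (c : Conf Tid Lbl D) (t : Tid) (li : LInstr Lbl D) (r : ℕ)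
      (e : (ℕ → D) → D) :
      li ∈ (P.threads t).code → c.pc t = li.src → li.ins = .assign r e →
      Step P c [(.loc t, some li)]
        ⟨updf c.pc t li.dst, c.mem, updf c.regs t (updf (c.regs t) r (e (c.regs t))), c.buf⟩
  | assert (c : Conf Tid Lbl D) (t : Tid) (li : LInstr Lbl D) (e : (ℕ → D) → D) :
      li ∈ (P.threads t).code → c.pc t = li.src → li.ins = .assert e →
      e (c.regs t) ≠ 0 →
      Step P c [(.loc t, some li)] ⟨updf c.pc t li.dst, c.mem, c.regs, c.buf⟩
  | tas (c : Conf Tid Lbl D) (t : Tid) (li : LInstr Lbl D) (r : ℕ)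
      (ae ve : (ℕ → D) → D) (a vold vnew : D) :
      li ∈ (P.threads t).code → c.pc t = li.src → li.ins = .tas r ae ve →
      c.buf t = [] → a = ae (c.regs t) → vold = c.mem a → vnew = ve (c.regs t) →
      Step P c [(.load t a vold, some li), (.issue t, some li), (.store t a vnew, some li)]
        ⟨updf c.pc t li.dst, updf c.mem a vnew, updf c.regs t (updf (c.regs t) r vold), c.buf⟩

/-- Reflexive-transitive closure of `Step`, concatenating the emitted events. -/
inductive Steps [Zero D] (P : Program Tid Lbl D) :
    Conf Tid Lbl D → List (Ev Tid Lbl D) → Conf Tid Lbl D → Prop where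
  | refl (c : Conf Tid Lbl D) : Steps P c [] c
  | trans (c₁ : Conf Tid Lbl D) (ρ₁ : List (Ev Tid Lbl D)) (c₂ : Conf Tid Lbl D)
      (ρ₂ : List (Ev Tid Lbl D)) (c₃ : Conf Tid Lbl D) :
      Step P c₁ ρ₁ c₂ → Steps P c₂ ρ₂ c₃ → Steps P c₁ (ρ₁ ++ ρ₂) c₃

/-- A run of `P` from the initial configuration. -/
def Run [Zero D] (P : Program Tid Lbl D) (ρ : List (Ev Tid Lbl D)) (c : Conf Tid Lbl D) : Prop :=
  Steps P (initConf P) ρ c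

/-- The action sequence of an annotated run. -/
def acts (ρ : List (Ev Tid Lbl D)) : List (Act Tid D) := ρ.map Prod.fst

/-- TSO computations: action sequences leading from the initial configuration
to a configuration in which all buffers are empty. -/
def TSOComput [Zero D] (P : Program Tid Lbl D) (τ : List (Act Tid D)) : Prop :=
  ∃ ρ c, Run P ρ c ∧ acts ρ = τ ∧ ∀ t, c.buf t = []

/-- SC shape: every issue action is immediately followed by its store action
(no buffering).  TSO computations of this shape are exactly the SC
computations; fences then have no effect since buffers are always empty. -/
def SCshape (τ : List (Act Tid D)) : Prop :=
  ∀ i t, τ[i]? = some (.issue t) → ∃ a v, τ[i + 1]? = some (.store t a v)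

/-- SC computations. -/
def SCComput [Zero D] (P : Program Tid Lbl D) (τ : List (Act Tid D)) : Prop :=
  TSOComput P τ ∧ SCshape τ

def TSOTraces [Zero D] (P : Program Tid Lbl D) : Set (Trace Tid D) :=
  {T | ∃ τ, TSOComput P τ ∧ traceOf τ = T}

def SCTraces [Zero D] (P : Program Tid Lbl D) : Set (Trace Tid D) :=
  {T | ∃ τ, SCComput P τ ∧ traceOf τ = T}

/-- TSO robustness: the TSO traces coincide with the SC traces. -/
def Robust [Zero D] (P : Program Tid Lbl D) : Prop := TSOTraces P = SCTraces P

/-! ### Delays, violations -/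

/-- Number of actions of thread `t` strictly between positions `i` and `j`. -/
def distBetween (τ : List (Act Tid D)) (t : Tid) (i j : ℕ) : ℕ :=
  (((τ.take j).drop (i + 1)).filter fun a => decide (a.thread = t)).length

/-- The delay of the store action at position `j`: the distance between it and
its issue action. -/
def storeDelay (τ : List (Act Tid D)) (j : ℕ) : ℕ :=
  match τ[j]? with
  | some (.store t _ _) =>
      match issueOfStore τ j with
      | some i => distBetween τ t i j
      | none => 0
  | _ => 0

/-- The number of delays of a computation: the sum of the distances between
corresponding issue and store actions. -/
def delays (τ : List (Act Tid D)) : ℕ :=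
  ((List.range τ.length).map (storeDelay τ)).sum

/-- A violating TSO computation: its trace is not an SC trace of the program. -/
def Violating [Zero D] (P : Program Tid Lbl D) (τ : List (Act Tid D)) : Prop :=
  TSOComput P τ ∧ traceOf τ ∉ SCTraces P

/-- A minimal violation: a violating computation with the minimal number of
delays among all violating computations of `P`. -/
def MinViolation [Zero D] (P : Program Tid Lbl D) (τ : List (Act Tid D)) : Prop :=
  Violating P τ ∧ ∀ τ', Violating P τ' → delays τ ≤ delays τ'

/-! ### Happens-before through an infix -/

/-- One step of a happens-before path between positions of a computation:
the two positions denote nodes related by `hb` or by `po⁺` (an issue and its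
corresponding store action denote the same node, which covers the issue
relation). -/
def hbStep (τ : List (Act Tid D)) (p q : ℕ) : Prop :=
  ∃ m n, nodeAt τ p = some m ∧ nodeAt τ q = some n ∧
    (m = n ∨ (traceOf τ).hb m n ∨ Relation.TransGen (traceOf τ).po m n)

/-- `a` happens-before `b` through `β` (for `τ = α·a·β·b·γ`, `i` the position
of `a`, `j` the position of `b`): there is a subsequence `c₁ … cₙ` of `β`
such that consecutive elements of `a·c₁ … cₙ·b` are related by `hb ∪ po⁺`. -/
def hbThrough (τ : List (Act Tid D)) (i j : ℕ) : Prop :=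
  ∃ l : List ℕ, List.Chain' (· < ·) (i :: l ++ [j]) ∧ List.Chain' (hbStep τ) (i :: l ++ [j])

/-! ### Attacks and TSO witnesses -/

/-- An attack: an attacker thread, a store instruction and a load instruction. -/
structure Attack (Tid Lbl D : Type) : Type where
  attacker : Tid
  stinst : LInstr Lbl D
  ldinst : LInstr Lbl D

def isStoreInstr (li : LInstr Lbl D) : Prop := ∃ ae ve, li.ins = .store ae ve
def isLoadInstr (li : LInstr Lbl D) : Prop := ∃ r ae, li.ins = .load r ae

/-- The attack's instructions belong to the attacker thread and have the right
kinds. -/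
def ValidAttack (P : Program Tid Lbl D) (A : Attack Tid Lbl D) : Prop :=
  A.stinst ∈ (P.threads A.attacker).code ∧ isStoreInstr A.stinst ∧
  A.ldinst ∈ (P.threads A.attacker).code ∧ isLoadInstr A.ldinst

/-- The computation `τ₁ · isu · τ₂ · ld · τ₃ · st · τ₄` of a TSO witness. -/
def witnessWord (att : Tid) (τ₁ τ₂ τ₃ τ₄ : List (Act Tid D)) (aL vL aS vS : D) :
    List (Act Tid D) :=
  τ₁ ++ .issue att :: (τ₂ ++ .load att aL vL :: (τ₃ ++ .store att aS vS :: τ₄))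

/-- Conditions (W1)–(W5) for a TSO witness
`τ = τ₁ · isu_st · τ₂ · ld · τ₃ · st · τ₄` of the attack `A`:
(W1) only the attacker delays stores; (W2) `st` is an instance of `stinst` and
the first delayed store of the attacker, `ld` is an instance of `ldinst` and
the last action of the attacker overstepped by `st` (`τ₂` contains no fences
and no stores of the attacker); (W3) `ld hb⁺ a` for every action `a` in
`ld · τ₃ · st`; (W4) `τ₄` consists only of stores of the attacker issued
before `ld` and delayed past it; (W5) all these delayed stores have addresses
different from the address of `ld`. -/
def WitnessShape [Zero D] (P : Program Tid Lbl D) (A : Attack Tid Lbl D)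
    (τ₁ τ₂ τ₃ τ₄ : List (Act Tid D)) (aL vL aS vS : D) : Prop :=
  ValidAttack P A ∧
  aS ≠ aL ∧
  (let att := A.attacker
   let τ : List (Act Tid D) := witnessWord att τ₁ τ₂ τ₃ τ₄ aL vL aS vS
   let pIsu : ℕ := τ₁.length
   let pLd : ℕ := τ₁.length + 1 + τ₂.length
   let pSt : ℕ := τ₁.length + 1 + τ₂.length + 1 + τ₃.length
   -- τ is a TSO computation; the issue at pIsu stems from stinst, the load at
   -- pLd stems from ldinst, and the attacker executes no fence in between
   (∃ ρ c, Run P ρ c ∧ acts ρ = τ ∧ (∀ t, c.buf t = []) ∧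
      (∃ ev, ρ[pIsu]? = some ev ∧ ev.2 = some A.stinst) ∧
      (∃ ev, ρ[pLd]? = some ev ∧ ev.2 = some A.ldinst) ∧
      (∀ q, pIsu < q → q < pLd →
        ¬ ∃ li, ρ[q]? = some (Act.loc att, some li) ∧ li.ins = Instr.mfence)) ∧
   -- st is the store action corresponding to the issue action at pIsu
   issueOfStore τ pSt = some pIsu ∧
   -- (W1): the stores of all other threads immediately follow their issues
   (∀ t, t ≠ att → ∀ j a v, τ[j]? = some (.store t a v) → storeDelay τ j = 0) ∧
   -- (W2): st is the first delayed store of the attacker …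
   (∀ j a v, j < pSt → τ[j]? = some (.store att a v) → storeDelay τ j = 0) ∧
   -- … and τ₂ contains no stores of the attacker (ld is the last overstepped action)
   (∀ x ∈ τ₂, ¬ isStoreOf att x) ∧
   -- τ₃ contains only helper actions
   (∀ x ∈ τ₃, x.thread ≠ att) ∧
   -- (W3): ld happens-before every action in ld·τ₃·st
   (∀ q, pLd < q → q ≤ pSt → ∃ m n, nodeAt τ pLd = some m ∧ nodeAt τ q = some n ∧
      Relation.TransGen (traceOf τ).hb m n) ∧
   -- (W4): τ₄ consists only of stores of the attacker …
   (∀ x ∈ τ₄, ∃ a v, x = Act.store att a v ∧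
      -- (W5): … whose addresses differ from the address of ld
      a ≠ aL) ∧
   -- (W4): … that were issued before ld
   (∀ j, pSt < j → ∀ a v, τ[j]? = some (.store att a v) →
      ∃ i, issueOfStore τ j = some i ∧ i < pLd))

/-- A TSO witness for attack `A`. -/
def TSOWitness [Zero D] (P : Program Tid Lbl D) (A : Attack Tid Lbl D)
    (τ : List (Act Tid D)) : Prop :=
  ∃ τ₁ τ₂ τ₃ τ₄ aL vL aS vS,
    τ = witnessWord A.attacker τ₁ τ₂ τ₃ τ₄ aL vL aS vS ∧
    WitnessShape P A τ₁ τ₂ τ₃ τ₄ aL vL aS vS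

/-- A feasible attack: an attack admitting a TSO witness. -/
def FeasibleAttack [Zero D] (P : Program Tid Lbl D) (A : Attack Tid Lbl D) : Prop :=
  ValidAttack P A ∧ ∃ τ, TSOWitness P A τ
/-! ### The instrumentation (Section 5) -/

/-- The data domain of the instrumented program: base values, auxiliary delay
addresses `(a, d)` and tagged buffered values `(v, d)`, auxiliary
happens-before addresses `(a, hb)`, the fresh addresses `a_st`, `hb`, `suc`
(and the flag used in the parameterized instrumentation), access levels
(`acc 1` = load access, `acc 2` = store access; no access is the initial
value `0`), and the value `true`. -/
inductive IVal (D : Type) : Type where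
  | base (v : D)
  | dAddr (a : D)
  | dVal (v : D)
  | hbAddr (a : D)
  | aSt
  | hbFlag
  | sucFlag
  | attFlag
  | acc (k : ℕ)
  | tru

instance [Zero D] : Zero (IVal D) := ⟨.base 0⟩

/-- Read a base value (seeing through the delay tag). -/
def IVal.toD [Zero D] : IVal D → D
  | .base v => v
  | .dVal v => v
  | _ => (0 : D)

/-- Labels of the instrumented program: original labels, labels of the code
copy, and two kinds of fresh intermediate labels. -/
abbrev ILbl (Lbl : Type) : Type := Lbl ⊕ Lbl ⊕ (ℕ × ℕ × ℕ) ⊕ (Lbl × ℕ)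

def olbl : Lbl → ILbl Lbl := Sum.inl
def clbl : Lbl → ILbl Lbl := fun l => Sum.inr (Sum.inl l)
def nlbl : ℕ × ℕ × ℕ → ILbl Lbl := fun x => Sum.inr (Sum.inr (Sum.inl x))
def slbl : Lbl × ℕ → ILbl Lbl := fun x => Sum.inr (Sum.inr (Sum.inr x))

/-- Registers of the instrumented program: register `r` of the original
program becomes `r + 2`; registers `0`, `1` are the fresh auxiliary
registers. -/
def shiftRho [Zero D] (ρ : ℕ → IVal D) : ℕ → D := fun r => (ρ (r + 2)).toD

def liftE [Zero D] (e : (ℕ → D) → D) : (ℕ → IVal D) → IVal D :=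
  fun ρ => .base (e (shiftRho ρ))
def dAddrE [Zero D] (e : (ℕ → D) → D) : (ℕ → IVal D) → IVal D :=
  fun ρ => .dAddr (e (shiftRho ρ))
def dValE [Zero D] (e : (ℕ → D) → D) : (ℕ → IVal D) → IVal D :=
  fun ρ => .dVal (e (shiftRho ρ))
def hbAddrE [Zero D] (e : (ℕ → D) → D) : (ℕ → IVal D) → IVal D :=
  fun ρ => .hbAddr (e (shiftRho ρ))

def truE : (ℕ → IVal D) → IVal D := fun _ => .tru

/-- A condition as an expression: nonzero iff the condition holds. -/
def condE [Zero D] (p : (ℕ → IVal D) → Prop) : (ℕ → IVal D) → IVal D :=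
  fun ρ => if p ρ then .tru else .base 0

/-- Lift an instruction of the original program to the instrumented domain. -/
def liftInstr [Zero D] : Instr D → Instr (IVal D)
  | .load r ae => .load (r + 2) (liftE ae)
  | .store ae ve => .store (liftE ae) (liftE ve)
  | .mfence => .mfence
  | .assign r e => .assign (r + 2) (liftE e)
  | .assert e => .assert (liftE e)
  | .tas r ae ve => .tas (r + 2) (liftE ae) (liftE ve)

def liftLI [Zero D] (li : LInstr Lbl D) : LInstr (ILbl Lbl) (IVal D) :=
  ⟨olbl li.src, liftInstr li.ins, olbl li.dst⟩

/-- Instrumentation `⟪stinst⟫` of the attack's store (Equation (1)): execute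
the store on the auxiliary delay address, record the used address in `a_st`,
and move to the code copy. -/
def attMoveStore [Zero D] (st : LInstr Lbl D) : List (LInstr (ILbl Lbl) (IVal D)) :=
  match st.ins with
  | .store ae ve =>
      [⟨olbl st.src, .store (dAddrE ae) (dValE ve), nlbl (0, 0, 0)⟩,
       ⟨nlbl (0, 0, 0), .store (fun _ => .aSt) (liftE ae), clbl st.dst⟩]
  | _ => []

/-- Instrumentation `⟪ldinst⟫` of the attack's load (Equation (2)): check that
the load has not read its value early, raise the `hb` flag and set the
happens-before address of the load's address to load access; then the
attacker stops. -/
def attMoveLoad [Zero D] (ld : LInstr Lbl D) : List (LInstr (ILbl Lbl) (IVal D)) :=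
  match ld.ins with
  | .load _ ae =>
      [⟨clbl ld.src, .load 0 (dAddrE ae), nlbl (0, 1, 0)⟩,
       ⟨nlbl (0, 1, 0), .assert (condE fun ρ => ρ 0 = IVal.base 0), nlbl (0, 1, 1)⟩,
       ⟨nlbl (0, 1, 1), .store (fun _ => .hbFlag) truE, nlbl (0, 1, 2)⟩,
       ⟨nlbl (0, 1, 2), .store (hbAddrE ae) (fun _ => .acc 1), nlbl (0, 1, 3)⟩]
  | _ => []

/-- The attacker's code copy (Equations (3)–(6)): stores go to the auxiliary
delay addresses, loads read the buffered value from the delay address if there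
is one and memory otherwise, fences are deleted. -/
def attCopy [Zero D] (i : ℕ) (li : LInstr Lbl D) : List (LInstr (ILbl Lbl) (IVal D)) :=
  match li.ins with
  | .store ae ve => [⟨clbl li.src, .store (dAddrE ae) (dValE ve), clbl li.dst⟩]
  | .load r ae =>
      [⟨clbl li.src, .load 0 (dAddrE ae), nlbl (0, 2 + i, 0)⟩,
       ⟨nlbl (0, 2 + i, 0), .assert (condE fun ρ => ρ 0 = IVal.base 0), nlbl (0, 2 + i, 1)⟩,
       ⟨nlbl (0, 2 + i, 1), .load (r + 2) (liftE ae), clbl li.dst⟩,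
       ⟨nlbl (0, 2 + i, 0), .assert (condE fun ρ => ρ 0 ≠ IVal.base 0), nlbl (0, 2 + i, 2)⟩,
       ⟨nlbl (0, 2 + i, 2), .load (r + 2) (dAddrE ae), clbl li.dst⟩]
  | .mfence => []
  | .tas _ _ _ => []
  | ins => [⟨clbl li.src, liftInstr ins, clbl li.dst⟩]

/-- The instrumented attacker thread. -/
def attackerThread [Zero D] (st ld : LInstr Lbl D) (th : ThreadCode Lbl D) :
    ThreadCode (ILbl Lbl) (IVal D) :=
  ⟨th.nregs + 2, olbl th.init,
    th.code.map liftLI ++ attMoveStore st ++ attMoveLoad ld ++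
      (th.code.mapIdx fun i li => attCopy i li).flatten⟩

/-- Helpers executing the original code check that the `hb` flag has not been
raised (Equation (7)). -/
def helpGuard [Zero D] (i : ℕ) (li : LInstr Lbl D) : List (LInstr (ILbl Lbl) (IVal D)) :=
  [⟨olbl li.src, .load 0 (fun _ => .hbFlag), nlbl (1, i, 0)⟩,
   ⟨nlbl (1, i, 0), .assert (condE fun ρ => ρ 0 = IVal.base 0), nlbl (1, i, 1)⟩,
   ⟨nlbl (1, i, 1), liftInstr li.ins, olbl li.dst⟩]

/-- Transitions of a helper into its code copy (Equations (8), (9)): a load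
requires a previous store access to its address, a store requires at least a
load access and records a store access. -/
def helpMove [Zero D] (i : ℕ) (li : LInstr Lbl D) : List (LInstr (ILbl Lbl) (IVal D)) :=
  match li.ins with
  | .load r ae =>
      [⟨olbl li.src, .load 0 (hbAddrE ae), nlbl (1, i, 2)⟩,
       ⟨nlbl (1, i, 2), .assert (condE fun ρ => ρ 0 = IVal.acc 2), nlbl (1, i, 3)⟩,
       ⟨nlbl (1, i, 3), .load (r + 2) (liftE ae), clbl li.dst⟩]
  | .store ae ve =>
      [⟨olbl li.src, .load 0 (hbAddrE ae), nlbl (1, i, 2)⟩,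
       ⟨nlbl (1, i, 2), .assert (condE fun ρ => ρ 0 = IVal.acc 1 ∨ ρ 0 = IVal.acc 2),
          nlbl (1, i, 4)⟩,
       ⟨nlbl (1, i, 4), .store (liftE ae) (liftE ve), nlbl (1, i, 5)⟩,
       ⟨nlbl (1, i, 5), .store (hbAddrE ae) (fun _ => .acc 2), clbl li.dst⟩]
  | .tas r ae ve =>
      [⟨olbl li.src, .load 0 (hbAddrE ae), nlbl (1, i, 2)⟩,
       ⟨nlbl (1, i, 2), .assert (condE fun ρ => ρ 0 = IVal.acc 1 ∨ ρ 0 = IVal.acc 2),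
          nlbl (1, i, 4)⟩,
       ⟨nlbl (1, i, 4), .tas (r + 2) (liftE ae) (liftE ve), nlbl (1, i, 5)⟩,
       ⟨nlbl (1, i, 5), .store (hbAddrE ae) (fun _ => .acc 2), clbl li.dst⟩]
  | _ => []

/-- The helpers' code copy (Equations (10)–(12)): loads and stores maintain
the maximal access type on the auxiliary happens-before addresses. -/
def helpCopy [Zero D] (i : ℕ) (li : LInstr Lbl D) : List (LInstr (ILbl Lbl) (IVal D)) :=
  match li.ins with
  | .store ae ve =>
      [⟨clbl li.src, .store (liftE ae) (liftE ve), nlbl (1, i, 6)⟩,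
       ⟨nlbl (1, i, 6), .store (hbAddrE ae) (fun _ => .acc 2), clbl li.dst⟩]
  | .load r ae =>
      [⟨clbl li.src, .assign 0 (liftE ae), nlbl (1, i, 7)⟩,
       ⟨nlbl (1, i, 7), .load (r + 2) (fun ρ => ρ 0), nlbl (1, i, 8)⟩,
       ⟨nlbl (1, i, 8), .load 1 (fun ρ => .hbAddr ((ρ 0).toD)), nlbl (1, i, 9)⟩,
       ⟨nlbl (1, i, 9), .store (fun ρ => .hbAddr ((ρ 0).toD))
          (fun ρ => if ρ 1 = IVal.acc 2 then IVal.acc 2 else IVal.acc 1), clbl li.dst⟩]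
  | .tas r ae ve =>
      [⟨clbl li.src, .tas (r + 2) (liftE ae) (liftE ve), nlbl (1, i, 10)⟩,
       ⟨nlbl (1, i, 10), .store (hbAddrE ae) (fun _ => .acc 2), clbl li.dst⟩]
  | ins => [⟨clbl li.src, liftInstr ins, clbl li.dst⟩]

/-- The success check (Equation (13)), added at every label of the code copy:
if the happens-before address of the address recorded in `a_st` has been
accessed, raise the success flag. -/
def sucCheck [Zero D] (l : Lbl) : List (LInstr (ILbl Lbl) (IVal D)) :=
  [⟨clbl l, .load 0 (fun _ => .aSt), slbl (l, 0)⟩,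
   ⟨slbl (l, 0), .load 1 (fun ρ => .hbAddr ((ρ 0).toD)), slbl (l, 1)⟩,
   ⟨slbl (l, 1), .assert (condE fun ρ => ρ 1 ≠ IVal.base 0), slbl (l, 2)⟩,
   ⟨slbl (l, 2), .store (fun _ => .sucFlag) truE, slbl (l, 3)⟩]

/-- The instrumented helper thread. -/
def helperThread [Zero D] (th : ThreadCode Lbl D) : ThreadCode (ILbl Lbl) (IVal D) :=
  ⟨th.nregs + 2, olbl th.init,
    (th.code.mapIdx fun i li =>
      helpGuard i li ++ helpMove i li ++ helpCopy i li ++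
      sucCheck li.src ++ sucCheck li.dst).flatten⟩

/-- The program `P_A`: `P` instrumented for the attack `A`. -/
def instrument [Zero D] (P : Program Tid Lbl D) (A : Attack Tid Lbl D) :
    Program Tid (ILbl Lbl) (IVal D) :=
  ⟨fun t => if t = A.attacker then attackerThread A.stinst A.ldinst (P.threads t)
            else helperThread (P.threads t)⟩

/-- SC reachability of a configuration satisfying `G`. -/
def ReachSC [Zero D] (P : Program Tid Lbl D) (G : Conf Tid Lbl D → Prop) : Prop :=
  ∃ ρ c, Run P ρ c ∧ SCshape (acts ρ) ∧ G c

/-- The instrumented program reaches a goal configuration (a configuration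
with `val(suc) = true`) under SC. -/
def ReachGoalSC {Lbl' : Type} [Zero D] (P' : Program Tid Lbl' (IVal D)) : Prop :=
  ReachSC P' fun c => c.mem .sucFlag = .tru

/-! ### Parameterized programs and the parameterized instrumentation -/

/-- The instance `P(I)` of a parameterized program `P` with threads
`t₁, …, t_k`: it declares `I i` identical copies of thread `t_i`. -/
def instProg {k : ℕ} (P : Program (Fin k) Lbl D) (I : Fin k → ℕ) :
    Program (Σ i : Fin k, Fin (I i)) Lbl D :=
  ⟨fun ti => P.threads ti.1⟩

/-- A parameterized program is robust if all its instances are robust. -/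
def ParamRobust {k : ℕ} [Zero D] (P : Program (Fin k) Lbl D) : Prop :=
  ∀ I : Fin k → ℕ, Robust (instProg P I)

/-- In the parameterized instrumentation, the attacker's move to the code copy
additionally performs an atomic test-and-set of a fresh flag variable, so that
at most one copy of the attacker thread delays stores. -/
def attMoveStoreTas [Zero D] (st : LInstr Lbl D) : List (LInstr (ILbl Lbl) (IVal D)) :=
  match st.ins with
  | .store ae ve =>
      [⟨olbl st.src, .tas 0 (fun _ => .attFlag) truE, nlbl (0, 0, 1)⟩,
       ⟨nlbl (0, 0, 1), .assert (condE fun ρ => ρ 0 = IVal.base 0), nlbl (0, 0, 2)⟩,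
       ⟨nlbl (0, 0, 2), .store (dAddrE ae) (dValE ve), nlbl (0, 0, 0)⟩,
       ⟨nlbl (0, 0, 0), .store (fun _ => .aSt) (liftE ae), clbl st.dst⟩]
  | _ => []

/-- The attacker thread of the parameterized instrumentation: instrumented
both as an attacker (with the test-and-set guarded move) and as a helper. -/
def pAttackerThread [Zero D] (st ld : LInstr Lbl D) (th : ThreadCode Lbl D) :
    ThreadCode (ILbl Lbl) (IVal D) :=
  ⟨th.nregs + 2, olbl th.init,
    (th.code.mapIdx fun i li =>
      helpGuard i li ++ helpMove i li ++ helpCopy i li ++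
      sucCheck li.src ++ sucCheck li.dst).flatten ++
    attMoveStoreTas st ++ attMoveLoad ld ++
    (th.code.mapIdx fun i li => attCopy i li).flatten⟩

/-- The parameterized instrumentation `P_A` of a parameterized program. -/
def pinstrument {k : ℕ} [Zero D] (P : Program (Fin k) Lbl D) (A : Attack (Fin k) Lbl D) :
    Program (Fin k) (ILbl Lbl) (IVal D) :=
  ⟨fun t => if t = A.attacker then pAttackerThread A.stinst A.ldinst (P.threads t)
            else helperThread (P.threads t)⟩
/-! ### Fence insertion -/

/-- Inserting fences at the labels in `F`: each instruction from a label
`l ∈ F` is moved to the fresh label `l_f` (encoded `Sum.inr l`), and an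
`mfence` instruction from `l` to `l_f` is added. -/
def insertFences (P : Program Tid Lbl D) (F : Finset Lbl) :
    Program Tid (Lbl ⊕ Lbl) D :=
  ⟨fun t =>
    ⟨(P.threads t).nregs, Sum.inl (P.threads t).init,
      ((P.threads t).code.map fun li =>
        ⟨if li.src ∈ F then Sum.inr li.src else Sum.inl li.src, li.ins, Sum.inl li.dst⟩) ++
      F.toList.map fun l => ⟨Sum.inl l, Instr.mfence, Sum.inr l⟩⟩⟩

/-- A valid fence set: inserting fences at its labels yields a robust program. -/
def ValidFenceSet [Zero D] (P : Program Tid Lbl D) (F : Finset Lbl) : Prop :=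
  Robust (insertFences P F)

/-- An irreducible valid fence set: no strict subset is valid. -/
def IrreducibleFenceSet [Zero D] (P : Program Tid Lbl D) (F : Finset Lbl) : Prop :=
  ValidFenceSet P F ∧ ∀ F' ⊂ F, ¬ ValidFenceSet P F'

/-- The labelled instruction of the fenced program corresponding to a labelled
instruction of `P`. -/
def mapLI (F : Finset Lbl) (li : LInstr Lbl D) : LInstr (Lbl ⊕ Lbl) D :=
  ⟨if li.src ∈ F then Sum.inr li.src else Sum.inl li.src, li.ins, Sum.inl li.dst⟩

/-- The attack of the fenced program corresponding to an attack of `P`. -/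
def mapAttack (F : Finset Lbl) (A : Attack Tid Lbl D) : Attack Tid (Lbl ⊕ Lbl) D :=
  ⟨A.attacker, mapLI F A.stinst, mapLI F A.ldinst⟩

/-- `F` eliminates the attack `A`: after inserting the fences of `F`, the
attack admits no TSO witness. -/
def EliminatesAttack [Zero D] (P : Program Tid Lbl D) (F : Finset Lbl)
    (A : Attack Tid Lbl D) : Prop :=
  ¬ ∃ τ, TSOWitness (insertFences P F) (mapAttack F A) τ

/-- An irreducible eliminating fence set for attack `A`. -/
def IrredElim [Zero D] (P : Program Tid Lbl D) (F : Finset Lbl)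
    (A : Attack Tid Lbl D) : Prop :=
  EliminatesAttack P F A ∧ ∀ F' ⊂ F, ¬ EliminatesAttack P F' A

/-- The (finitely many) labels occurring in the program. -/
def labelsOf [Fintype Tid] (P : Program Tid Lbl D) : Finset Lbl :=
  Finset.univ.biUnion fun t =>
    (((P.threads t).code.map LInstr.src) ++ ((P.threads t).code.map LInstr.dst) ++
      [(P.threads t).init]).toFinset

/-- The cost of a fence set. -/
def fenceCost (c : Lbl → ℝ) (F : Finset Lbl) : ℝ := ∑ l ∈ F, c l

/-- A feasible point of the 0/1-ILP of Section 6.2: a 0/1 (Boolean) variable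
`xF F` for every irreducible eliminating fence set `F` of every feasible
attack and a 0/1 variable `xl l` for every label `l`, such that for every
feasible attack `A` some irreducible eliminating fence set for `A` is selected
(`∑ᵢ x_{Fᵢ} ≥ 1`), and whenever a set is selected all its labels are selected
(`∑_{l ∈ Fᵢ} x_l ≥ |Fᵢ| · x_{Fᵢ}`). -/
def ILPFeasiblePoint [Zero D] (P : Program Tid Lbl D)
    (xF : Finset Lbl → Bool) (xl : Lbl → Bool) : Prop :=
  (∀ A : Attack Tid Lbl D, FeasibleAttack P A →
      ∃ F, IrredElim P F A ∧ xF F = true) ∧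
  (∀ (A : Attack Tid Lbl D) (F : Finset Lbl), FeasibleAttack P A → IrredElim P F A →
      xF F = true → ∀ l ∈ F, xl l = true)

/-- The objective function `f(x) = ∑_l c(l) · x_l` of the ILP. -/
def ILPCost [Fintype Tid] (P : Program Tid Lbl D) (c : Lbl → ℝ) (xl : Lbl → Bool) : ℝ :=
  ∑ l ∈ labelsOf P, if xl l then c l else 0

/-! ### Petri nets and the counter abstraction -/

/-- A Petri net, given by its weight functions `pre` and `post`. -/
structure PetriNet (S T : Type) : Type where
  pre : S → T → ℕ
  post : T → S → ℕ

/-- A transition is enabled in a marking. -/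
def PetriNet.enabled (N : PetriNet S T) (m : S → ℕ) (t : T) : Prop :=
  ∀ s, N.pre s t ≤ m s

/-- Firing a transition. -/
def PetriNet.fire (N : PetriNet S T) (m : S → ℕ) (t : T) : S → ℕ :=
  fun s => m s - N.pre s t + N.post t s

/-- Reachability of a marking by a firing sequence. -/
inductive PetriNet.Reach (N : PetriNet S T) : (S → ℕ) → (S → ℕ) → Prop where
  | refl (m : S → ℕ) : PetriNet.Reach N m m
  | step (m : S → ℕ) (t : T) (m' : S → ℕ) :
      N.enabled m t → PetriNet.Reach N (N.fire m t) m' → PetriNet.Reach N m m'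

/-- Coverability of a marking. -/
def PetriNet.Coverable (N : PetriNet S T) (m₀ m : S → ℕ) : Prop :=
  ∃ m', PetriNet.Reach N m₀ m' ∧ ∀ s, m s ≤ m' s

/-- Expressions evaluate identically on register valuations that agree on the
declared registers `0, …, n-1`. -/
def ExprOK (n : ℕ) (e : (ℕ → D) → D) : Prop :=
  ∀ ρ ρ' : ℕ → D, (∀ r < n, ρ r = ρ' r) → e ρ = e ρ'

/-- An instruction only uses the declared registers. -/
def InstrOK (n : ℕ) : Instr D → Prop
  | .load r ae => r < n ∧ ExprOK n ae
  | .store ae ve => ExprOK n ae ∧ ExprOK n ve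
  | .mfence => True
  | .assign r e => r < n ∧ ExprOK n e
  | .assert e => ExprOK n e
  | .tas r ae ve => r < n ∧ ExprOK n ae ∧ ExprOK n ve

/-- All threads only use their declared registers. -/
def RegsBounded (P : Program Tid Lbl D) : Prop :=
  ∀ t, ∀ li ∈ (P.threads t).code, InstrOK (P.threads t).nregs li.ins

/-- Extension of a valuation of the declared registers by `0`. -/
def extV [Zero D] (n : ℕ) (vs : Fin n → D) : ℕ → D :=
  fun r => if h : r < n then vs ⟨r, h⟩ else 0

/-- Update of a valuation of the declared registers. -/
def updV {n : ℕ} (vs : Fin n → D) (r : ℕ) (v : D) : Fin n → D :=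
  fun q => if (q : ℕ) = r then v else vs q

section PN

variable {k : ℕ} (P : Program (Fin k) Lbl D)

/-- Places of the counter-abstraction Petri net: a place `p_{a,v}` for every
address `a` and value `v` (representing `val(a) = v`), and a place
`p_{i,l,v̄}` for every thread `i`, label `l` and valuation `v̄` of the declared
registers (counting the instances of thread `i` at control state `l` with
registers `v̄`). -/
def PNPlace : Type :=
  (D × D) ⊕ (Σ i : Fin k, Lbl × (Fin ((P.threads i).nregs) → D))

/-- Raw transitions: a spawn transition for every thread, and a transition for
every thread, instruction (index) and relevant valuation/value combination. -/
def PNTransRaw : Type :=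
  (Fin k) ⊕ (Σ i : Fin k, ℕ × ((Fin ((P.threads i).nregs) → D) × D))

variable [Zero D]

/-- Guard: the indexed instruction exists, and asserts only fire when their
condition evaluates to a nonzero value. -/
def PNGuard : PNTransRaw P → Prop
  | .inl _ => True
  | .inr ⟨i, j, vs, _⟩ =>
      match ((P.threads i).code)[j]? with
      | some li =>
          match li.ins with
          | .assert e => e (extV ((P.threads i).nregs) vs) ≠ 0
          | _ => True
      | none => False

def PNTrans : Type := {x : PNTransRaw P // PNGuard P x}

/-- The weight function `W(s, t)`. -/
def PNpre : PNPlace P → PNTrans P → ℕ := fun s t =>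
  match t.1 with
  | .inl _ => 0
  | .inr ⟨i, j, vs, v⟩ =>
      match ((P.threads i).code)[j]? with
      | none => 0
      | some li =>
          (if s = Sum.inr ⟨i, (li.src, vs)⟩ then 1 else 0) +
          (let ext := extV ((P.threads i).nregs) vs
           match li.ins with
           | .load _ ae => if s = Sum.inl (ae ext, v) then 1 else 0
           | .store ae _ => if s = Sum.inl (ae ext, v) then 1 else 0
           | .tas _ ae _ => if s = Sum.inl (ae ext, v) then 1 else 0
           | _ => 0)

/-- The weight function `W(t, s)`. -/
def PNpost : PNTrans P → PNPlace P → ℕ := fun t s =>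
  match t.1 with
  | .inl i => if s = Sum.inr ⟨i, ((P.threads i).init, fun _ => (0 : D))⟩ then 1 else 0
  | .inr ⟨i, j, vs, v⟩ =>
      match ((P.threads i).code)[j]? with
      | none => 0
      | some li =>
          let ext := extV ((P.threads i).nregs) vs
          match li.ins with
          | .load r ae =>
              (if s = Sum.inr ⟨i, (li.dst, updV vs r v)⟩ then 1 else 0) +
              (if s = Sum.inl (ae ext, v) then 1 else 0)
          | .store ae ve =>
              (if s = Sum.inr ⟨i, (li.dst, vs)⟩ then 1 else 0) +
              (if s = Sum.inl (ae ext, ve ext) then 1 else 0)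
          | .mfence => if s = Sum.inr ⟨i, (li.dst, vs)⟩ then 1 else 0
          | .assign r e => if s = Sum.inr ⟨i, (li.dst, updV vs r (e ext))⟩ then 1 else 0
          | .assert _ => if s = Sum.inr ⟨i, (li.dst, vs)⟩ then 1 else 0
          | .tas r ae ve =>
              (if s = Sum.inr ⟨i, (li.dst, updV vs r v)⟩ then 1 else 0) +
              (if s = Sum.inl (ae ext, ve ext) then 1 else 0)

/-- The counter-abstraction Petri net of a parameterized program. -/
def PNnet : PetriNet (PNPlace P) (PNTrans P) := ⟨PNpre P, PNpost P⟩

/-- The initial marking: one token on `p_{a,0}` for every address `a`. -/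
def PNm0 : PNPlace P → ℕ := fun s =>
  match s with
  | .inl (_, v) => if v = 0 then 1 else 0
  | .inr _ => 0

/-- The marking to be covered: one token on `p_{suc,true}`. -/
def PNmsuc (aSuc vTrue : D) : PNPlace P → ℕ := fun s =>
  if s = Sum.inl (aSuc, vTrue) then 1 else 0

end PN
/-- The action `a` appended to a computation; a store comes with its issue. -/
def apnd {Tid D : Type} (x : Act Tid D) : List (Act Tid D) :=
  match x with
  | .store t a v => [.issue t, .store t a v]
  | y => [y]

/-! ### Auxiliary combinatorial lemmas -/

section Aux

variable {σ τ : List (Act Tid D)}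

/-- Positions of actions satisfying `p`. -/
def idxs (τ : List (Act Tid D)) (p : Act Tid D → Prop) : List ℕ :=
  (List.range τ.length).filter fun i => decide (∃ a, τ[i]? = some a ∧ p a)

lemma posOfNth_eq_idxs (p : Act Tid D → Prop) (k : ℕ) :
    posOfNth τ p k = (idxs τ p)[k]? := by
  unfold posOfNth idxs
  congr 2
  funext i
  congr 1

lemma mem_idxs {p : Act Tid D → Prop} {j : ℕ} :
    j ∈ idxs τ p ↔ ∃ a, τ[j]? = some a ∧ p a := by
  constructor
  · intro h
    have := List.of_mem_filter h
    simpa using this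
  · rintro ⟨a, ha, hpa⟩
    refine List.mem_filter.2 ⟨?_, by simp; exact ⟨a, ha, hpa⟩⟩
    simp [List.mem_range]
    exact (List.getElem?_eq_some_iff.1 ha).1

lemma idxs_pairwise (p : Act Tid D → Prop) : (idxs τ p).Pairwise (· < ·) :=
  List.pairwise_lt_range.filter _

/-- Index of an element in a sorted list. -/
lemma sorted_filter_length {l : List ℕ} (hl : l.Pairwise (· < ·)) :
    ∀ {k v : ℕ}, l[k]? = some v → (l.filter fun x => decide (x < v)).length = k := by
  induction l with
  | nil => intro k v h; simp at h
  | cons h t ih =>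
    intro k v hkv
    rw [List.pairwise_cons] at hl
    obtain ⟨hh, ht⟩ := hl
    match k with
    | 0 =>
      simp at hkv; subst hkv
      have hnil : (h :: t).filter (fun x => decide (x < h)) = [] := by
        rw [List.filter_eq_nil_iff]
        intro b hb hlt
        simp at hlt
        rcases List.mem_cons.1 hb with rfl | hb'
        · omega
        · exact absurd hlt (not_lt.2 (le_of_lt (hh b hb')))
      simp [hnil]
    | k+1 =>
      simp only [List.getElem?_cons_succ] at hkv
      have hv : v ∈ t := by
        rcases List.getElem?_eq_some_iff.1 hkv with ⟨hlen, rfl⟩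
        exact List.getElem_mem _
      have hhv : h < v := hh v hv
      simp [List.filter_cons, hhv, ih ht hkv]

lemma sorted_getElem_of_mem {l : List ℕ} (hl : l.Pairwise (· < ·)) {v : ℕ} (hv : v ∈ l) :
    l[(l.filter fun x => decide (x < v)).length]? = some v := by
  rcases List.mem_iff_getElem?.1 hv with ⟨k, hk⟩
  rw [sorted_filter_length hl hk]; exact hk

lemma filter_lt_succ (l : List ℕ) (i : ℕ) :
    (l.filter fun j => decide (j < i + 1)).length =
    (l.filter fun j => decide (j < i)).length + (l.filter fun j => decide (j = i)).length := by
  induction l with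
  | nil => simp
  | cons h t ih =>
    simp only [Nat.lt_add_one_iff] at ih
    by_cases h1 : h < i
    · have h2 : h ≤ i := by omega
      have h3 : ¬ (h = i) := by omega
      simp [List.filter_cons, h1, h2, h3, ih]; omega
    · by_cases h4 : h = i
      · have h2 : h ≤ i := by omega
        simp [List.filter_cons, h1, h2, h4, ih]; omega
      · have h2 : ¬ (h ≤ i) := by omega
        simp [List.filter_cons, h1, h2, h4, ih]

lemma nat_eq_of_perm_of_sorted {l₁ l₂ : List ℕ} (hp : l₁.Perm l₂)
    (h1 : l₁.Pairwise (· < ·)) (h2 : l₂.Pairwise (· < ·)) : l₁ = l₂ :=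
  hp.eq_of_pairwise (fun _ _ _ _ hab hba => absurd (hab.trans hba) (lt_irrefl _)) h1 h2

lemma cntP_eq_idxs (p : Act Tid D → Prop) (i : ℕ) :
    cntP τ p i = ((idxs τ p).filter fun j => decide (j < i)).length := by
  induction i with
  | zero => simp [cntP, idxs]
  | succ i ih =>
    rw [filter_lt_succ, ← ih]
    by_cases hi : i < τ.length
    · have hsome : ∃ x, τ[i]? = some x := ⟨τ[i], List.getElem?_eq_getElem hi⟩
      rcases hsome with ⟨x, hx⟩
      have htake : τ.take (i+1) = τ.take i ++ [x] := by
        rw [List.take_succ, hx]; rfl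
      have hcnt : cntP τ p (i+1) = cntP τ p i + if p x then 1 else 0 := by
        simp only [cntP, htake, List.filter_append, List.length_append]
        congr 1
        by_cases hpx : p x <;> simp [hpx]
      rw [hcnt]
      congr 1
      have hnd : (idxs τ p).Nodup := (idxs_pairwise p).nodup
      by_cases hpx : p x
      · have hmem : i ∈ idxs τ p := mem_idxs.2 ⟨x, hx, hpx⟩
        simp only [hpx, if_true]
        have : (idxs τ p).filter (fun j => decide (j = i)) = [i] := by
          apply nat_eq_of_perm_of_sorted
          · rw [List.perm_ext_iff_of_nodup (hnd.filter _) (by simp)]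
            intro b
            simp [List.mem_filter]
            intro hb; subst hb; exact hmem
          · exact ((idxs_pairwise p).filter _)
          · simp
        simp [this]
      · simp only [hpx, if_false]
        have : (idxs τ p).filter (fun j => decide (j = i)) = [] := by
          rw [List.filter_eq_nil_iff]
          intro b hb hbi
          simp at hbi; subst hbi
          rcases mem_idxs.1 hb with ⟨y, hy, hpy⟩
          rw [hx] at hy
          exact hpx (by cases hy; exact hpy)
        simp [this]
    · have htake : τ.take (i+1) = τ.take i := by
        rw [List.take_of_length_le (by omega), List.take_of_length_le (by omega)]
      have : cntP τ p (i+1) = cntP τ p i := by simp [cntP, htake]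
      rw [this]
      have : (idxs τ p).filter (fun j => decide (j = i)) = [] := by
        rw [List.filter_eq_nil_iff]
        intro b hb hbi
        simp at hbi; subst hbi
        rcases mem_idxs.1 hb with ⟨y, hy, _⟩
        exact hi (List.getElem?_eq_some_iff.1 hy).1
      simp [this]

lemma idxs_mem_lt {p : Act Tid D → Prop} {j : ℕ} (h : j ∈ idxs τ p) : j < τ.length := by
  rcases mem_idxs.1 h with ⟨a, ha, _⟩
  exact (List.getElem?_eq_some_iff.1 ha).1

lemma cntP_length_eq (p : Act Tid D → Prop) :
    cntP τ p τ.length = (idxs τ p).length := by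
  rw [cntP_eq_idxs]
  congr 1
  apply List.filter_eq_self.2
  intro j hj
  simp [idxs_mem_lt hj]

lemma cntP_mono (p : Act Tid D → Prop) {i j : ℕ} (h : i ≤ j) : cntP τ p i ≤ cntP τ p j := by
  have hpre : τ.take i <+: τ.take j := by
    have := List.take_prefix i (τ.take j)
    rwa [List.take_take, Nat.min_eq_left h] at this
  exact (List.IsPrefix.filter _ hpre).length_le

lemma cntP_succ_of_getElem {p : Act Tid D → Prop} {i : ℕ} {x : Act Tid D}
    (hx : τ[i]? = some x) :
    cntP τ p (i+1) = cntP τ p i + if p x then 1 else 0 := by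
  have htake : τ.take (i+1) = τ.take i ++ [x] := by
    rw [List.take_succ, hx]; rfl
  simp only [cntP, htake, List.filter_append, List.length_append]
  congr 1
  by_cases hpx : p x <;> simp [hpx]

end Aux

section Corr

variable {σ : List (Act Tid D)}

/-- Every store action is immediately preceded by its issue action. -/
def Adj (σ : List (Act Tid D)) : Prop :=
  ∀ j t a v, σ[j]? = some (.store t a v) → 0 < j ∧ σ[j-1]? = some (.issue t)

lemma isStoreOf_iff {t : Tid} {x : Act Tid D} :
    isStoreOf t x ↔ ∃ a v, x = .store t a v := by
  cases x <;> simp [isStoreOf, Act.isStore, Act.thread]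

lemma isIssueOf_iff {t : Tid} {x : Act Tid D} :
    isIssueOf t x ↔ x = .issue t := by
  cases x <;> simp [isIssueOf, Act.isIssue, Act.thread]

lemma map_succ_pairwise {l : List ℕ} (h : l.Pairwise (· < ·)) :
    (l.map (· + 1)).Pairwise (· < ·) :=
  h.map (· + 1) (fun a b hab => by simpa using hab)

lemma idxs_store_eq (hsh : SCshape σ) (hadj : Adj σ) (t : Tid) :
    idxs σ (isStoreOf t) = (idxs σ (isIssueOf t)).map (· + 1) := by
  apply nat_eq_of_perm_of_sorted
  · rw [List.perm_ext_iff_of_nodup (idxs_pairwise _).nodup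
      ((map_succ_pairwise (idxs_pairwise (τ := σ) (isIssueOf t))).nodup)]
    intro j
    rw [mem_idxs]
    constructor
    · rintro ⟨x, hx, hst⟩
      rcases isStoreOf_iff.1 hst with ⟨a, v, rfl⟩
      rcases hadj j t a v hx with ⟨hj, hiss⟩
      rw [List.mem_map]
      exact ⟨j - 1, mem_idxs.2 ⟨_, hiss, isIssueOf_iff.2 rfl⟩, by omega⟩
    · rw [List.mem_map]
      rintro ⟨i, hi, rfl⟩
      rcases mem_idxs.1 hi with ⟨x, hx, hiss⟩
      rcases isIssueOf_iff.1 hiss with rfl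
      rcases hsh i t hx with ⟨a, v, hst⟩
      exact ⟨_, hst, isStoreOf_iff.2 ⟨a, v, rfl⟩⟩
  · exact idxs_pairwise _
  · exact map_succ_pairwise (idxs_pairwise _)

lemma issueOfStore_eq (hsh : SCshape σ) (hadj : Adj σ) {j : ℕ} {t : Tid} {a v : D}
    (hj : σ[j]? = some (.store t a v)) :
    0 < j ∧ issueOfStore σ j = some (j - 1) ∧ σ[j-1]? = some (.issue t) := by
  rcases hadj j t a v hj with ⟨hj0, hiss⟩
  refine ⟨hj0, ?_, hiss⟩
  have hImem : j - 1 ∈ idxs σ (isIssueOf t) := mem_idxs.2 ⟨_, hiss, isIssueOf_iff.2 rfl⟩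
  have hcnt : cntP σ (isStoreOf t) j =
      ((idxs σ (isIssueOf t)).filter fun x => decide (x < j - 1)).length := by
    rw [cntP_eq_idxs, idxs_store_eq hsh hadj, List.filter_map]
    rw [List.length_map]
    congr 1
    apply List.filter_congr
    intro i hi
    simp only [Function.comp]
    have : (i + 1 < j) = (i < j - 1) := by
      apply propext; omega
    congr 1
  have hun : issueOfStore σ j = posOfNth σ (isIssueOf t) (cntP σ (isStoreOf t) j) := by
    simp only [issueOfStore, hj]
  rw [hun, posOfNth_eq_idxs, hcnt]
  exact sorted_getElem_of_mem (idxs_pairwise _) hImem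

lemma storeOfIssue_eq (hsh : SCshape σ) (hadj : Adj σ) {i : ℕ} {t : Tid}
    (hi : σ[i]? = some (.issue t)) :
    storeOfIssue σ i = some (i + 1) := by
  have hImem : i ∈ idxs σ (isIssueOf t) := mem_idxs.2 ⟨_, hi, isIssueOf_iff.2 rfl⟩
  have hun : storeOfIssue σ i = posOfNth σ (isStoreOf t) (cntP σ (isIssueOf t) i) := by
    simp only [storeOfIssue, hi]
  rw [hun, posOfNth_eq_idxs, idxs_store_eq hsh hadj]
  have hcnt : cntP σ (isIssueOf t) i =
      ((idxs σ (isIssueOf t)).filter fun x => decide (x < i)).length := cntP_eq_idxs _ _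
  rw [hcnt, List.getElem?_map, sorted_getElem_of_mem (idxs_pairwise _) hImem]
  rfl

lemma no_pending (hsh : SCshape σ) (hadj : Adj σ) {t : Tid} {a : D} {p i : ℕ} :
    ¬ pendingIssue σ t a p i := by
  rintro ⟨hip, hiss, j, v, hsoi, hpj, _⟩
  rw [storeOfIssue_eq hsh hadj hiss] at hsoi
  cases hsoi
  omega

end Corr

section Semantic

def Adj1 (σ : List (Act Tid D)) : Prop :=
  ∀ j t a v, 0 < j → σ[j]? = some (.store t a v) → σ[j-1]? = some (.issue t)

lemma scshape_tail {x : Act Tid D} {l : List (Act Tid D)} (h : SCshape (x :: l)) :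
    SCshape l := by
  intro i t hi
  have := h (i+1) t (by simpa using hi)
  simpa using this

lemma adj_cons_other {x : Act Tid D} {l : List (Act Tid D)}
    (hx1 : ¬ x.isStore) (hx2 : ¬ x.isIssue) (h : Adj l) : Adj (x :: l) := by
  intro j t a v hj
  match j with
  | 0 =>
    simp at hj; subst hj; simp [Act.isStore] at hx1
  | j+1 =>
    simp only [List.getElem?_cons_succ] at hj
    rcases h j t a v hj with ⟨hj0, hiss⟩
    obtain ⟨j', rfl⟩ : ∃ j', j = j' + 1 := ⟨j - 1, by omega⟩
    refine ⟨by omega, ?_⟩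
    simpa using hiss

lemma adj_cons_issue {t₀ : Tid} {l : List (Act Tid D)}
    (h0 : ∃ a v, l[0]? = some (Act.store t₀ a v)) (h : Adj1 l) : Adj (.issue t₀ :: l) := by
  intro j t a v hj
  match j with
  | 0 => simp at hj
  | 1 =>
    simp only [List.getElem?_cons_succ] at hj
    rcases h0 with ⟨a', v', h0⟩
    rw [hj] at h0
    cases h0
    exact ⟨by omega, by simp⟩
  | j+2 =>
    simp only [List.getElem?_cons_succ] at hj
    have hiss := h (j+1) t a v (by omega) hj
    refine ⟨by omega, ?_⟩
    simpa using hiss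

lemma adj_cons_issue_store {t : Tid} {a v : D} {l : List (Act Tid D)}
    (h : Adj l) : Adj (.issue t :: .store t a v :: l) := by
  intro j t' a' v' hj
  match j with
  | 0 => simp at hj
  | 1 =>
    simp only [List.getElem?_cons_succ, List.getElem?_cons_zero] at hj
    cases hj
    exact ⟨by omega, by simp⟩
  | j+2 =>
    simp only [List.getElem?_cons_succ] at hj
    rcases h j t' a' v' hj with ⟨hj0, hiss⟩
    obtain ⟨j', rfl⟩ : ∃ j', j = j' + 1 := ⟨j - 1, by omega⟩
    refine ⟨by omega, ?_⟩
    simpa using hiss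

lemma adj1_cons_store {t₀ : Tid} {a₀ v₀ : D} {l : List (Act Tid D)}
    (h : Adj l) : Adj1 (.store t₀ a₀ v₀ :: l) := by
  intro j t a v hj0 hj
  obtain ⟨j', rfl⟩ : ∃ j', j = j' + 1 := ⟨j - 1, by omega⟩
  simp only [List.getElem?_cons_succ] at hj
  rcases h j' t a v hj with ⟨hj0', hiss⟩
  obtain ⟨j'', rfl⟩ : ∃ j'', j' = j'' + 1 := ⟨j' - 1, by omega⟩
  simpa using hiss

theorem steps_adj [Zero D] {P : Program Tid Lbl D} {c : Conf Tid Lbl D}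
    {ρ : List (Ev Tid Lbl D)} {c' : Conf Tid Lbl D} (h : Steps P c ρ c') :
    (SCshape (acts ρ) → (∀ t, c.buf t = []) → Adj (acts ρ) ∧ ∀ t, c'.buf t = []) ∧
    (SCshape (acts ρ) → ∀ t a v, c.buf t = [(a, v)] →
      (∀ t', t' ≠ t → c.buf t' = []) →
      (∃ a' v', (acts ρ)[0]? = some (Act.store t a' v')) →
      Adj1 (acts ρ) ∧ ∀ t', c'.buf t' = []) := by
  induction h with
  | refl c =>
    constructor
    · intro _ hbuf
      exact ⟨by intro j t a v hj; simp [acts] at hj, hbuf⟩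
    · intro _ t a v _ _ hst
      simp [acts] at hst
  | trans c₁ ρ₁ c₂ ρ₂ c₃ hstep hsteps ih =>
    have hacts : acts (ρ₁ ++ ρ₂) = acts ρ₁ ++ acts ρ₂ := by simp [acts]
    cases hstep with
    | loadBuf t li r ae a v h1 h2 h3 h4 h5 =>
      constructor
      · intro hsh hbuf
        rw [hbuf t] at h5
        simp [bufVal] at h5
      · intro hsh t' a' v' hb hothers hfirst
        rcases hfirst with ⟨a'', v'', hfirst⟩
        simp [hacts, acts] at hfirst
    | loadMem t li r ae a v h1 h2 h3 h4 h5 h6 =>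
      constructor
      · intro hsh hbuf
        rw [hacts] at hsh ⊢
        simp only [acts, List.map_cons, List.map_nil, List.singleton_append] at hsh ⊢
        obtain ⟨hA, hE⟩ := ih.1 (scshape_tail hsh) hbuf
        exact ⟨adj_cons_other (by simp [Act.isStore]) (by simp [Act.isIssue]) hA, hE⟩
      · intro hsh t' a' v' hb hothers hfirst
        rcases hfirst with ⟨a'', v'', hfirst⟩
        simp [hacts, acts] at hfirst
    | storeIssue t li ae ve a v h1 h2 h3 h4 h5 =>
      constructor
      · intro hsh hbuf
        rw [hacts] at hsh ⊢
        simp only [acts, List.map_cons, List.map_nil, List.singleton_append] at hsh ⊢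
        rcases hsh 0 t (by simp) with ⟨a', v', h01⟩
        simp only [List.getElem?_cons_succ] at h01
        have hbt : (updf c₁.buf t (c₁.buf t ++ [(a, v)])) t = [(a, v)] := by
          simp [updf, hbuf t]
        have hbo : ∀ t', t' ≠ t → (updf c₁.buf t (c₁.buf t ++ [(a, v)])) t' = [] := by
          intro t' ht'; simp [updf, ht', hbuf t']
        obtain ⟨hA1, hE⟩ := ih.2 (scshape_tail hsh) t a v hbt hbo ⟨a', v', h01⟩
        exact ⟨adj_cons_issue ⟨a', v', h01⟩ hA1, hE⟩
      · intro hsh t' a' v' hb hothers hfirst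
        rcases hfirst with ⟨a'', v'', hfirst⟩
        simp [hacts, acts] at hfirst
    | flush t a v β hb1 =>
      constructor
      · intro hsh hbuf
        rw [hbuf t] at hb1
        simp at hb1
      · intro hsh t' a' v' hb hothers hfirst
        have ht : t = t' := by
          by_contra hne
          rw [hothers t hne] at hb1
          simp at hb1
        subst ht
        rw [hb] at hb1
        obtain ⟨rfl, rfl⟩ : a = a' ∧ v = v' := by
          constructor <;> [skip; skip] <;> cases hb1 <;> rfl
        have hβ : β = [] := by cases hb1; rfl
        subst hβ
        rw [hacts] at hsh ⊢
        simp only [acts, List.map_cons, List.map_nil, List.singleton_append] at hsh ⊢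
        have hbuf2 : ∀ t'', (updf c₁.buf t []) t'' = [] := by
          intro t''
          by_cases h : t'' = t
          · simp [updf, h]
          · simp [updf, h, hothers t'' h]
        obtain ⟨hA, hE⟩ := ih.1 (scshape_tail hsh) hbuf2
        exact ⟨adj1_cons_store hA, hE⟩
    | fence t li h1 h2 h3 h4 =>
      constructor
      · intro hsh hbuf
        rw [hacts] at hsh ⊢
        simp only [acts, List.map_cons, List.map_nil, List.singleton_append] at hsh ⊢
        obtain ⟨hA, hE⟩ := ih.1 (scshape_tail hsh) hbuf
        exact ⟨adj_cons_other (by simp [Act.isStore]) (by simp [Act.isIssue]) hA, hE⟩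
      · intro hsh t' a' v' hb hothers hfirst
        rcases hfirst with ⟨a'', v'', hfirst⟩
        simp [hacts, acts] at hfirst
    | assign t li r e h1 h2 h3 =>
      constructor
      · intro hsh hbuf
        rw [hacts] at hsh ⊢
        simp only [acts, List.map_cons, List.map_nil, List.singleton_append] at hsh ⊢
        obtain ⟨hA, hE⟩ := ih.1 (scshape_tail hsh) hbuf
        exact ⟨adj_cons_other (by simp [Act.isStore]) (by simp [Act.isIssue]) hA, hE⟩
      · intro hsh t' a' v' hb hothers hfirst
        rcases hfirst with ⟨a'', v'', hfirst⟩
        simp [hacts, acts] at hfirst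
    | assert t li e h1 h2 h3 h4 =>
      constructor
      · intro hsh hbuf
        rw [hacts] at hsh ⊢
        simp only [acts, List.map_cons, List.map_nil, List.singleton_append] at hsh ⊢
        obtain ⟨hA, hE⟩ := ih.1 (scshape_tail hsh) hbuf
        exact ⟨adj_cons_other (by simp [Act.isStore]) (by simp [Act.isIssue]) hA, hE⟩
      · intro hsh t' a' v' hb hothers hfirst
        rcases hfirst with ⟨a'', v'', hfirst⟩
        simp [hacts, acts] at hfirst
    | tas t li r ae ve a vold vnew h1 h2 h3 h4 h5 h6 h7 =>
      constructor
      · intro hsh hbuf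
        rw [hacts] at hsh ⊢
        simp only [acts, List.map_cons, List.map_nil, List.cons_append,
          List.nil_append] at hsh ⊢
        obtain ⟨hA, hE⟩ := ih.1 (scshape_tail (scshape_tail (scshape_tail hsh))) hbuf
        exact ⟨adj_cons_other (by simp [Act.isStore]) (by simp [Act.isIssue])
          (adj_cons_issue_store hA), hE⟩
      · intro hsh t' a' v' hb hothers hfirst
        rcases hfirst with ⟨a'', v'', hfirst⟩
        simp [hacts, acts] at hfirst

lemma adj_of_scComput [Zero D] {P : Program Tid Lbl D} {σ : List (Act Tid D)}
    (h : SCComput P σ) : Adj σ := by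
  obtain ⟨⟨ρ, c, hrun, hactsρ, hemp⟩, hsh⟩ := h
  subst hactsρ
  exact ((steps_adj hrun).1 hsh (fun t => rfl)).1

end Semantic

section Nodes

variable {σ : List (Act Tid D)}

lemma cntP_zero (p : Act Tid D → Prop) : cntP σ p 0 = 0 := by simp [cntP]

lemma cntP_cons (x₀ : Act Tid D) {σ' : List (Act Tid D)} (pr : Act Tid D → Prop) (p : ℕ) :
    cntP (x₀ :: σ') pr (p+1) = cntP σ' pr p + (if pr x₀ then 1 else 0) := by
  simp only [cntP, List.take_succ_cons, List.filter_cons]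
  by_cases h : pr x₀ <;> simp [h]

lemma rankAt_eq {p : ℕ} {x : Act Tid D} (hp : σ[p]? = some x) :
    rankAt σ p = cntP σ (fun y => y.thread = x.thread ∧ ¬ y.isStore) p := by
  simp only [rankAt, hp]

lemma nodeAt_nonstore {p : ℕ} {x : Act Tid D} (hp : σ[p]? = some x) (hx : ¬ x.isStore) :
    nodeAt σ p = some (x.thread, rankAt σ p) := by
  cases x with
  | store t a v => simp [Act.isStore] at hx
  | issue t => simp [nodeAt, hp, Act.thread]
  | load t a v => simp [nodeAt, hp, Act.thread]
  | loc t => simp [nodeAt, hp, Act.thread]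

lemma nodeAt_store (hsh : SCshape σ) (hadj : Adj σ) {j : ℕ} {t : Tid} {a v : D}
    (hj : σ[j]? = some (.store t a v)) :
    0 < j ∧ σ[j-1]? = some (.issue t) ∧ nodeAt σ j = some (t, rankAt σ (j-1)) ∧
      nodeAt σ (j-1) = some (t, rankAt σ (j-1)) := by
  obtain ⟨hj0, hios, hiss⟩ := issueOfStore_eq hsh hadj hj
  refine ⟨hj0, hiss, ?_, ?_⟩
  · simp only [nodeAt, hj, hios, Option.map_some]
  · rw [nodeAt_nonstore hiss (by simp [Act.isIssue, Act.isStore])]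
    rfl

lemma rank_lt_of_lt {p q : ℕ} {x y : Act Tid D} (hp : σ[p]? = some x) (hxs : ¬ x.isStore)
    (hq : σ[q]? = some y) (hth : x.thread = y.thread) (hlt : p < q) :
    rankAt σ p < rankAt σ q := by
  rw [rankAt_eq hp, rankAt_eq hq, ← hth]
  have h1 : cntP σ (fun z => z.thread = x.thread ∧ ¬ z.isStore) (p+1) =
      cntP σ (fun z => z.thread = x.thread ∧ ¬ z.isStore) p + 1 := by
    rw [cntP_succ_of_getElem hp, if_pos ⟨rfl, hxs⟩]
  have h2 := cntP_mono (τ := σ) (fun z => z.thread = x.thread ∧ ¬ z.isStore)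
    (show p + 1 ≤ q by omega)
  omega

lemma nodeAt_inj {p q : ℕ} {x y : Act Tid D} (hp : σ[p]? = some x) (hxs : ¬ x.isStore)
    (hq : σ[q]? = some y) (hys : ¬ y.isStore) (hnn : nodeAt σ p = nodeAt σ q) : p = q := by
  rw [nodeAt_nonstore hp hxs, nodeAt_nonstore hq hys] at hnn
  simp only [Option.some.injEq, Prod.mk.injEq] at hnn
  obtain ⟨hth, hrk⟩ := hnn
  by_contra hne
  rcases Nat.lt_or_ge p q with hlt | hge
  · exact absurd hrk (Nat.ne_of_lt (rank_lt_of_lt hp hxs hq hth hlt))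
  · have hlt : q < p := by omega
    exact absurd hrk.symm (Nat.ne_of_lt (rank_lt_of_lt hq hys hp hth.symm hlt))

lemma mergeStores_length (l : List (Act Tid D)) :
    ∀ s, (mergeStores l s).length = (l.filter fun y => decide (¬ y.isStore)).length := by
  induction l with
  | nil => intro s; rfl
  | cons x l ih =>
    intro s
    cases x <;> simp [mergeStores, List.filter_cons, Act.isStore, ih]

lemma threadNodes_length (t : Tid) :
    (threadNodes σ t).length = cntP σ (fun y => y.thread = t ∧ ¬ y.isStore) σ.length := by
  rw [threadNodes, mergeStores_length, List.filter_filter]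
  simp only [cntP, List.take_length]
  congr 1
  apply List.filter_congr
  intro y _
  by_cases h1 : y.thread = t <;> by_cases h2 : y.isStore <;> simp [h1, h2]

lemma threadNodes_cons_load {t₀ t : Tid} {a v : D} :
    threadNodes (.load t₀ a v :: σ) t =
      if t₀ = t then .load t₀ a v :: threadNodes σ t else threadNodes σ t := by
  by_cases h : t₀ = t <;>
    simp [threadNodes, List.filter_cons, Act.thread, isStoreOf, Act.isStore, h, mergeStores]

lemma threadNodes_cons_loc {t₀ t : Tid} :
    threadNodes (.loc t₀ :: σ) t =
      if t₀ = t then .loc t₀ :: threadNodes σ t else threadNodes σ t := by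
  by_cases h : t₀ = t <;>
    simp [threadNodes, List.filter_cons, Act.thread, isStoreOf, Act.isStore, h, mergeStores]

lemma threadNodes_cons_pair {t₀ t : Tid} {a v : D} :
    threadNodes (.issue t₀ :: .store t₀ a v :: σ) t =
      if t₀ = t then .store t₀ a v :: threadNodes σ t else threadNodes σ t := by
  by_cases h : t₀ = t <;>
    simp [threadNodes, List.filter_cons, Act.thread, isStoreOf, Act.isStore, Act.isIssue,
      h, mergeStores]

lemma adj_tail {x₀ : Act Tid D} {σ' : List (Act Tid D)} (hx₀ : ¬ x₀.isIssue)
    (h : Adj (x₀ :: σ')) : Adj σ' := by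
  intro j t a v hj
  rcases h (j+1) t a v (by simpa using hj) with ⟨_, hiss⟩
  match j, hiss with
  | 0, hiss => simp at hiss; subst hiss; simp [Act.isIssue] at hx₀
  | j+1, hiss =>
    simp only [Nat.add_sub_cancel, List.getElem?_cons_succ] at hiss
    exact ⟨by omega, by simpa using hiss⟩

lemma adj_tail2 {t₀ : Tid} {a v : D} {σ'' : List (Act Tid D)}
    (h : Adj (.issue t₀ :: .store t₀ a v :: σ'')) : Adj σ'' := by
  intro j t' a' v' hj
  rcases h (j+2) t' a' v' (by simpa using hj) with ⟨_, hiss⟩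
  have h21 : j + 2 - 1 = j + 1 := by omega
  rw [h21, List.getElem?_cons_succ] at hiss
  have hiss' : (Act.store t₀ a v :: σ'')[j]? = some (Act.issue t') := hiss
  cases j with
  | zero => simp at hiss'
  | succ j' =>
    simp only [List.getElem?_cons_succ] at hiss'
    exact ⟨by omega, hiss'⟩

lemma threadNodes_label_aux :
    ∀ (n : ℕ) (σ : List (Act Tid D)), σ.length ≤ n → SCshape σ → Adj σ →
    ∀ (p : ℕ) (x : Act Tid D), σ[p]? = some x → ¬ x.isStore →
    (threadNodes σ x.thread)[rankAt σ p]? = if x.isIssue then σ[p+1]? else some x := by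
  intro n
  induction n with
  | zero =>
    intro σ hlen hsh hadj p x hp hx
    have := (List.getElem?_eq_some_iff.1 hp).1
    omega
  | succ n ih =>
    intro σ hlen hsh hadj p x hp hxs
    cases σ with
    | nil => simp at hp
    | cons x₀ σ' =>
      cases p with
      | zero =>
        simp only [List.getElem?_cons_zero, Option.some.injEq] at hp
        subst hp
        have hrk : rankAt (x₀ :: σ') 0 = 0 := by
          rw [rankAt_eq (show (x₀ :: σ')[0]? = some x₀ by simp), cntP_zero]
        rw [hrk]
        cases x₀ with
        | store t a v => simp [Act.isStore] at hxs
        | load t a v =>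
          rw [if_neg (by simp [Act.isIssue])]
          simp [Act.thread, threadNodes_cons_load]
        | loc t =>
          rw [if_neg (by simp [Act.isIssue])]
          simp [Act.thread, threadNodes_cons_loc]
        | issue t =>
          rw [if_pos (by simp [Act.isIssue])]
          rcases hsh 0 t (by simp) with ⟨a, v, hst⟩
          simp only [List.getElem?_cons_succ] at hst
          rcases σ' with _ | ⟨y, σ''⟩
          · simp at hst
          · simp only [List.getElem?_cons_zero, Option.some.injEq] at hst
            subst hst
            simp [Act.thread, threadNodes_cons_pair]
      | succ p' =>
        simp only [List.getElem?_cons_succ] at hp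
        cases x₀ with
        | store t a v =>
          rcases hadj 0 t a v (by simp) with ⟨h0, _⟩
          omega
        | load t₀ a₀ v₀ =>
          have hrec := ih σ' (by simp at hlen; omega) (scshape_tail hsh)
            (adj_tail (by simp [Act.isIssue]) hadj) p' x hp hxs
          have hrk : rankAt (.load t₀ a₀ v₀ :: σ') (p'+1) =
              rankAt σ' p' + (if t₀ = x.thread then 1 else 0) := by
            rw [rankAt_eq (by simpa using hp), cntP_cons, rankAt_eq hp]
            congr 1
            by_cases h : t₀ = x.thread <;>
              simp [Act.thread, Act.isStore, h] <;> congr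
          rw [hrk, threadNodes_cons_load]
          by_cases h : t₀ = x.thread
          · rw [if_pos h, if_pos h]
            simpa using hrec
          · rw [if_neg h, if_neg h]
            simpa using hrec
        | loc t₀ =>
          have hrec := ih σ' (by simp at hlen; omega) (scshape_tail hsh)
            (adj_tail (by simp [Act.isIssue]) hadj) p' x hp hxs
          have hrk : rankAt (.loc t₀ :: σ') (p'+1) =
              rankAt σ' p' + (if t₀ = x.thread then 1 else 0) := by
            rw [rankAt_eq (by simpa using hp), cntP_cons, rankAt_eq hp]
            congr 1
            by_cases h : t₀ = x.thread <;>
              simp [Act.thread, Act.isStore, h] <;> congr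
          rw [hrk, threadNodes_cons_loc]
          by_cases h : t₀ = x.thread
          · rw [if_pos h, if_pos h]
            simpa using hrec
          · rw [if_neg h, if_neg h]
            simpa using hrec
        | issue t₀ =>
          rcases hsh 0 t₀ (by simp) with ⟨a, v, hst⟩
          simp only [List.getElem?_cons_succ] at hst
          rcases σ' with _ | ⟨y, σ''⟩
          · simp at hst
          · simp only [List.getElem?_cons_zero, Option.some.injEq] at hst
            subst hst
            cases p' with
            | zero =>
              simp only [List.getElem?_cons_zero, Option.some.injEq] at hp
              subst hp
              simp [Act.isStore] at hxs
            | succ p'' =>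
              simp only [List.getElem?_cons_succ] at hp
              have hrec := ih σ'' (by simp at hlen; omega)
                (scshape_tail (scshape_tail hsh)) (adj_tail2 hadj) p'' x hp hxs
              have hrk : rankAt (.issue t₀ :: .store t₀ a v :: σ'') (p''+2) =
                  rankAt σ'' p'' + (if t₀ = x.thread then 1 else 0) := by
                rw [rankAt_eq (by simpa using hp), cntP_cons, cntP_cons, rankAt_eq hp]
                rw [if_neg (by simp [Act.isStore])]
                simp only [Nat.add_zero]
                congr 1
                by_cases h : t₀ = x.thread <;> simp [Act.thread, Act.isStore, h] <;> congr
              rw [hrk, threadNodes_cons_pair]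
              by_cases h : t₀ = x.thread
              · rw [if_pos h, if_pos h]
                simpa using hrec
              · rw [if_neg h, if_neg h]
                simpa using hrec

lemma threadNodes_label (hsh : SCshape σ) (hadj : Adj σ) {p : ℕ} {x : Act Tid D}
    (hp : σ[p]? = some x) (hxs : ¬ x.isStore) :
    (threadNodes σ x.thread)[rankAt σ p]? = if x.isIssue then σ[p+1]? else some x :=
  threadNodes_label_aux σ.length σ le_rfl hsh hadj p x hp hxs

lemma rank_surj {t : Tid} {r : ℕ} (hr : r < (threadNodes σ t).length) :
    ∃ p x, σ[p]? = some x ∧ ¬ x.isStore ∧ x.thread = t ∧ rankAt σ p = r ∧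
      (idxs σ (fun y => y.thread = t ∧ ¬ y.isStore))[r]? = some p := by
  have hlen : (threadNodes σ t).length =
      (idxs σ (fun y => y.thread = t ∧ ¬ y.isStore)).length := by
    rw [threadNodes_length, cntP_length_eq]
  have hr' : r < (idxs σ (fun y => y.thread = t ∧ ¬ y.isStore)).length := hlen ▸ hr
  have hp? : (idxs σ (fun y => y.thread = t ∧ ¬ y.isStore))[r]? =
      some ((idxs σ (fun y => y.thread = t ∧ ¬ y.isStore))[r]) :=
    List.getElem?_eq_getElem hr'
  set p := (idxs σ (fun y => y.thread = t ∧ ¬ y.isStore))[r] with hpdef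
  have hpm : p ∈ idxs σ (fun y => y.thread = t ∧ ¬ y.isStore) := List.getElem_mem _
  rcases mem_idxs.1 hpm with ⟨x, hx, hth, hxs⟩
  have hrank : rankAt σ p = r := by
    rw [rankAt_eq hx, hth, cntP_eq_idxs]
    exact sorted_filter_length (idxs_pairwise _) hp?
  exact ⟨p, x, hx, hxs, hth, hrank, hp?⟩

lemma pos_of_lab (hsh : SCshape σ) (hadj : Adj σ) {t : Tid} {r : ℕ} {z : Act Tid D}
    (hl : (threadNodes σ t)[r]? = some z) :
    ∃ p, rankAt σ p = r ∧ nodeAt σ p = some (t, r) ∧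
      ( (σ[p]? = some z ∧ ¬ z.isStore ∧ ¬ z.isIssue ∧ z.thread = t) ∨
        (σ[p]? = some (.issue t) ∧ σ[p+1]? = some z ∧ ∃ a v, z = .store t a v) ) := by
  have hr : r < (threadNodes σ t).length := (List.getElem?_eq_some_iff.1 hl).1
  rcases rank_surj hr with ⟨p, x, hx, hxs, hth, hrank, _⟩
  have hG := threadNodes_label hsh hadj hx hxs
  rw [hth, hrank, hl] at hG
  have hnode : nodeAt σ p = some (t, r) := by
    rw [nodeAt_nonstore hx hxs, hth, hrank]
  refine ⟨p, hrank, hnode, ?_⟩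
  by_cases hxi : x.isIssue
  · rw [if_pos hxi] at hG
    have hxe : x = Act.issue t := by
      cases x <;> simp [Act.isIssue] at hxi <;> simp [Act.thread] at hth
      · rw [hth]
    right
    refine ⟨hxe ▸ hx, hG.symm, ?_⟩
    rcases hsh p t (hxe ▸ hx) with ⟨a, v, hst⟩
    rw [hst] at hG
    exact ⟨a, v, by cases hG; rfl⟩
  · rw [if_neg hxi] at hG
    cases hG
    exact Or.inl ⟨hx, hxs, hxi, hth⟩

end Nodes

section Order

variable {σ : List (Act Tid D)}

def AnchAt (σ : List (Act Tid D)) (p : ℕ) (m : Tid × ℕ) : Prop :=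
  nodeAt σ p = some m ∧ ∃ x, σ[p]? = some x ∧ ¬ x.isStore

lemma anch_unique {p q : ℕ} {m : Tid × ℕ} (h1 : AnchAt σ p m) (h2 : AnchAt σ q m) :
    p = q := by
  obtain ⟨hn1, x, hx, hxs⟩ := h1
  obtain ⟨hn2, y, hy, hys⟩ := h2
  exact nodeAt_inj hx hxs hy hys (hn1.trans hn2.symm)

lemma anch_of_nodeAt (hsh : SCshape σ) (hadj : Adj σ) {p : ℕ} {m : Tid × ℕ}
    (h : nodeAt σ p = some m) :
    ∃ p₀, AnchAt σ p₀ m ∧ p₀ ≤ p ∧ p ≤ p₀ + 1 := by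
  cases hx : σ[p]? with
  | none => simp [nodeAt, hx] at h
  | some x =>
    by_cases hxs : x.isStore
    · rcases x with t | ⟨t, a, v⟩ | ⟨t, a, v⟩ | t <;> simp [Act.isStore] at hxs
      obtain ⟨hp0, hiss, hnode, hnode'⟩ := nodeAt_store hsh hadj hx
      rw [hnode] at h
      refine ⟨p - 1, ⟨hnode'.trans h, Act.issue t, hiss, by simp [Act.isStore]⟩,
        by omega, by omega⟩
    · exact ⟨p, ⟨h, x, hx, hxs⟩, le_rfl, by omega⟩

lemma load_not_store {t : Tid} {a v : D} : ¬ (Act.load t a v : Act Tid D).isStore := by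
  simp [Act.isStore]

lemma issue_not_store {t : Tid} : ¬ (Act.issue t : Act Tid D).isStore := by
  simp [Act.isStore]

lemma exists_src (hsh : SCshape σ) (hadj : Adj σ) {pm : ℕ} {t : Tid} {adr v : D}
    (hl : σ[pm]? = some (.load t adr v))
    {j0 : ℕ} {t0 : Tid} {v0 : D} (hst : σ[j0]? = some (.store t0 adr v0)) (hlt : j0 < pm) :
    ∃ m js t1 v1, j0 ≤ js ∧ js < pm ∧ σ[js]? = some (.store t1 adr v1) ∧
      nodeAt σ js = some m ∧ srcRel σ m (t, rankAt σ pm) := by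
  classical
  set Q := fun (j : ℕ) => ∃ (t' : Tid) (v' : D), σ[j]? = some (Act.store t' adr v') with hQdef
  have hj0Q : Q j0 := ⟨t0, v0, hst⟩
  have hble : j0 ≤ pm - 1 := by omega
  have hQs : Q (Nat.findGreatest Q (pm-1)) := Nat.findGreatest_spec hble hj0Q
  set js := Nat.findGreatest Q (pm-1) with hjsdef
  have hjs_lt : js < pm := by
    have := Nat.findGreatest_le (P := Q) (pm-1)
    omega
  obtain ⟨t1, v1, hjs⟩ := hQs
  have hj0js : j0 ≤ js := Nat.le_findGreatest hble hj0Q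
  have hnode := (nodeAt_store hsh hadj hjs).2.2.1
  refine ⟨_, js, t1, v1, hj0js, hjs_lt, hjs, hnode, ?_⟩
  refine ⟨pm, t, adr, v, hl, nodeAt_nonstore hl load_not_store, Or.inr ⟨?_, js, hjs_lt,
    ⟨t1, v1, hjs⟩, ?_, hnode⟩⟩
  · rintro ⟨i, hpend⟩
    exact no_pending hsh hadj hpend
  · intro j' hj' hQ'
    exact Nat.le_findGreatest (by omega) hQ'

lemma src_structure (hsh : SCshape σ) (hadj : Adj σ) {m n : Tid × ℕ}
    (h : srcRel σ m n) :
    ∃ pm t adr v js t1 v1, σ[pm]? = some (.load t adr v) ∧ nodeAt σ pm = some n ∧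
      js < pm ∧ σ[js]? = some (.store t1 adr v1) ∧ nodeAt σ js = some m ∧
      (∀ j', j' < pm → (∃ t' v', σ[j']? = some (.store t' adr v')) → j' ≤ js) := by
  obtain ⟨p, t, a, v, hl, hn, hcase⟩ := h
  rcases hcase with ⟨i, hpend, _, _⟩ | ⟨_, j, hj, ⟨t', v', hst⟩, hmax, hm⟩
  · exact absurd hpend (no_pending hsh hadj)
  · exact ⟨p, t, a, v, j, t', v', hl, hn, hj, hst, hm, hmax⟩

lemma hb_anch (hsh : SCshape σ) (hadj : Adj σ) {m n : Tid × ℕ}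
    (h : (traceOf σ).hb m n) :
    ∃ p q, AnchAt σ p m ∧ AnchAt σ q n ∧ p < q := by
  rcases h with hpo | hso | hsrc | hcf
  · -- program order
    obtain ⟨hth, hlt, hlen⟩ := hpo
    have hlen' : n.2 < (threadNodes σ n.1).length := hlen
    have hlenm : m.2 < (threadNodes σ n.1).length := lt_trans hlt hlen'
    rcases rank_surj (t := n.1) hlen' with ⟨q, y, hy, hys, hyth, hyr, hq?⟩
    rcases rank_surj (t := n.1) hlenm with ⟨p, x, hx, hxs, hxth, hxr, hp?⟩
    have hpq : p < q := by
      have hpw := idxs_pairwise (τ := σ) (fun y => y.thread = n.1 ∧ ¬ y.isStore)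
      rw [List.pairwise_iff_getElem] at hpw
      obtain ⟨hm2, hpe⟩ := List.getElem?_eq_some_iff.1 hp?
      obtain ⟨hn2, hqe⟩ := List.getElem?_eq_some_iff.1 hq?
      have := hpw m.2 n.2 hm2 hn2 hlt
      rw [hpe, hqe] at this
      exact this
    refine ⟨p, q, ⟨?_, x, hx, hxs⟩, ⟨?_, y, hy, hys⟩, hpq⟩
    · rw [nodeAt_nonstore hx hxs, hxth, hxr, ← hth]
    · rw [nodeAt_nonstore hy hys, hyth, hyr]
  · -- store order
    obtain ⟨i, j, adr, hij, ⟨ti, vi, hi⟩, ⟨tj, vj, hj⟩, hni, hnj⟩ := hso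
    obtain ⟨hi0, hiiss, hinode, hinode'⟩ := nodeAt_store hsh hadj hi
    obtain ⟨hj0, hjiss, hjnode, hjnode'⟩ := nodeAt_store hsh hadj hj
    refine ⟨i - 1, j - 1, ⟨hinode'.trans (hinode.symm.trans hni), _, hiiss, issue_not_store⟩,
      ⟨hjnode'.trans (hjnode.symm.trans hnj), _, hjiss, issue_not_store⟩, by omega⟩
  · -- source
    obtain ⟨pm, t, adr, v, js, t1, v1, hl, hn, hjs_lt, hjs, hms, _⟩ :=
      src_structure hsh hadj hsrc
    obtain ⟨hjs0, hjsiss, hjsnode, hjsnode'⟩ := nodeAt_store hsh hadj hjs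
    refine ⟨js - 1, pm, ⟨hjsnode'.trans (hjsnode.symm.trans hms), _, hjsiss, issue_not_store⟩,
      ⟨hn, _, hl, load_not_store⟩, by omega⟩
  · -- conflict
    obtain ⟨adr, ⟨tm, vm, hm⟩, ⟨tn, vn, hn⟩, hdisj⟩ := hcf
    have hm' : (threadNodes σ m.1)[m.2]? = some (.load tm adr vm) := hm
    have hn' : (threadNodes σ n.1)[n.2]? = some (.store tn adr vn) := hn
    rcases pos_of_lab hsh hadj hm' with ⟨pm, hrm, hnm, hcm⟩
    have hload : σ[pm]? = some (.load tm adr vm) := by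
      rcases hcm with ⟨h1, _, _, _⟩ | ⟨_, _, ⟨a, v, heq⟩⟩
      · exact h1
      · simp at heq
    have htm : tm = m.1 := by
      rcases hcm with ⟨h1, _, _, h4⟩ | ⟨_, _, ⟨a, v, heq⟩⟩
      · rw [h1] at hload; cases hload; rw [← h4]; rfl
      · simp at heq
    rcases pos_of_lab hsh hadj hn' with ⟨pn, hrn, hnn, hcn⟩
    have hstore : σ[pn]? = some (.issue n.1) ∧ σ[pn+1]? = some (.store tn adr vn) := by
      rcases hcn with ⟨_, hns, _, _⟩ | ⟨h1, h2, _⟩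
      · simp [Act.isStore] at hns
      · exact ⟨h1, h2⟩
    have hAm : AnchAt σ pm m := ⟨hnm, _, hload, load_not_store⟩
    have hAn : AnchAt σ pn n := ⟨hnn, _, hstore.1, issue_not_store⟩
    refine ⟨pm, pn, hAm, hAn, ?_⟩
    have hne1 : pm ≠ pn := by
      intro he
      rw [he, hstore.1] at hload
      simp at hload
    have hne2 : pm ≠ pn + 1 := by
      intro he
      rw [he, hstore.2] at hload
      simp at hload
    by_contra hge
    have hlt2 : pn + 1 < pm := by omega
    rcases hdisj with ⟨s, hsrc, hso⟩ | hnosrc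
    · rcases src_structure hsh hadj hsrc with
        ⟨pm', t', adr', v', js, t1, v1, hl', hn'', hjs_lt, hjs, hms, hmax⟩
      have hload' : ¬ (Act.load t' adr' v' : Act Tid D).isStore := load_not_store
      have hpm' : pm' = pm := nodeAt_inj hl' hload' hload load_not_store
        (hn''.trans hnm.symm)
      subst hpm'
      have hadr : adr' = adr := by
        rw [hload] at hl'; cases hl'; rfl
      subst hadr
      obtain ⟨i2, j2, a2, hij2, ⟨ti2, vi2, hi2⟩, ⟨tj2, vj2, hj2⟩, hsi2, hsj2⟩ := hso
      obtain ⟨hi20, hi2iss, hi2node, hi2node'⟩ := nodeAt_store hsh hadj hi2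
      obtain ⟨hj20, hj2iss, hj2node, hj2node'⟩ := nodeAt_store hsh hadj hj2
      obtain ⟨hjs0, hjsiss, hjsnode, hjsnode'⟩ := nodeAt_store hsh hadj hjs
      -- i2 = js
      have hi2js : i2 - 1 = js - 1 := nodeAt_inj hi2iss issue_not_store hjsiss
        issue_not_store
        ((hi2node'.trans (hi2node.symm.trans hsi2)).trans
          (hjsnode'.trans (hjsnode.symm.trans hms)).symm)
      -- j2 = pn + 1
      have hj2pn : j2 - 1 = pn := nodeAt_inj hj2iss issue_not_store hstore.1
        issue_not_store
        ((hj2node'.trans (hj2node.symm.trans hsj2)).trans hnn.symm)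
      have hj2e : j2 = pn + 1 := by omega
      have hi2e : i2 = js := by omega
      have := hmax (pn + 1) hlt2 ⟨tn, vn, hstore.2⟩
      omega
    · rcases exists_src hsh hadj hload hstore.2 hlt2 with ⟨s, js, t1, v1, _, _, _, _, hsrc⟩
      refine hnosrc ⟨s, ?_⟩
      rw [htm, hrm] at hsrc
      exact hsrc

lemma rtg_anch (hsh : SCshape σ) (hadj : Adj σ) {m n : Tid × ℕ} {p : ℕ}
    (h : Relation.ReflTransGen (traceOf σ).hb m n) (hm : AnchAt σ p m) :
    ∀ q, AnchAt σ q n → p ≤ q := by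
  induction h with
  | refl => intro q hq; exact le_of_eq (anch_unique hm hq)
  | tail hmb hbc ih =>
    intro q hq
    obtain ⟨pb, qb, hAb, hAc, hlt⟩ := hb_anch hsh hadj hbc
    have hqb : qb = q := anch_unique hAc hq
    have hppb := ih pb hAb
    omega

end Order

section Transfer

variable {σ ext : List (Act Tid D)}

lemma getElem?_prefix {q : ℕ} (h : q < σ.length) : (σ ++ ext)[q]? = σ[q]? := by
  rw [List.getElem?_append]
  simp [h]

lemma cntP_prefix (p : Act Tid D → Prop) {i : ℕ} (h : i ≤ σ.length) :
    cntP (σ ++ ext) p i = cntP σ p i := by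
  simp only [cntP]
  rw [List.take_append_of_le_length h]

lemma rankAt_prefix {q : ℕ} (h : q < σ.length) : rankAt (σ ++ ext) q = rankAt σ q := by
  have he := getElem?_prefix (ext := ext) h
  cases hx : σ[q]? with
  | none => simp [List.getElem?_eq_getElem h] at hx
  | some x =>
    rw [rankAt_eq (he.trans hx), rankAt_eq hx, cntP_prefix _ (le_of_lt h)]

lemma nodeAt_some (hsh : SCshape σ) (hadj : Adj σ) {q : ℕ} (h : q < σ.length) :
    ∃ m, nodeAt σ q = some m := by
  have hx : σ[q]? = some σ[q] := List.getElem?_eq_getElem h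
  by_cases hs : (σ[q]).isStore
  · rcases he : σ[q] with t | ⟨t, a, v⟩ | ⟨t, a, v⟩ | t <;> rw [he] at hs <;>
      simp [Act.isStore] at hs
    exact ⟨_, (nodeAt_store hsh hadj (he ▸ hx)).2.2.1⟩
  · exact ⟨_, nodeAt_nonstore hx hs⟩

lemma nodeAt_prefix (hsh : SCshape σ) (hadj : Adj σ)
    (hshe : SCshape (σ ++ ext)) (hadje : Adj (σ ++ ext)) {q : ℕ} (h : q < σ.length) :
    nodeAt (σ ++ ext) q = nodeAt σ q := by
  have he := getElem?_prefix (ext := ext) h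
  cases hx : σ[q]? with
  | none => simp [List.getElem?_eq_getElem h] at hx
  | some x =>
    by_cases hxs : x.isStore
    · rcases x with t | ⟨t, a, v⟩ | ⟨t, a, v⟩ | t <;> simp [Act.isStore] at hxs
      obtain ⟨h0, _, hnode, _⟩ := nodeAt_store hsh hadj hx
      obtain ⟨_, _, hnodee, _⟩ := nodeAt_store hshe hadje (he.trans hx)
      rw [hnodee, hnode, rankAt_prefix (by omega)]
    · rw [nodeAt_nonstore (he.trans hx) hxs, nodeAt_nonstore hx hxs, rankAt_prefix h]

lemma threadNodes_length_mono (t : Tid) :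
    (threadNodes σ t).length ≤ (threadNodes (σ ++ ext) t).length := by
  rw [threadNodes_length, threadNodes_length]
  calc cntP σ (fun y => y.thread = t ∧ ¬ y.isStore) σ.length
      = cntP (σ ++ ext) (fun y => y.thread = t ∧ ¬ y.isStore) σ.length :=
        (cntP_prefix _ le_rfl).symm
    _ ≤ cntP (σ ++ ext) (fun y => y.thread = t ∧ ¬ y.isStore) (σ ++ ext).length :=
        cntP_mono _ (by simp)

lemma pos_lt_of_getElem? {q : ℕ} {x : Act Tid D} (h : σ[q]? = some x) : q < σ.length :=
  (List.getElem?_eq_some_iff.1 h).1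

lemma soRel_mono {m n : Tid × ℕ} (hsh : SCshape σ) (hadj : Adj σ)
    (hshe : SCshape (σ ++ ext)) (hadje : Adj (σ ++ ext))
    (hso : soRel σ m n) : soRel (σ ++ ext) m n := by
  obtain ⟨i, j, adr, hij, ⟨ti, vi, hi⟩, ⟨tj, vj, hj⟩, hni, hnj⟩ := hso
  have hil := pos_lt_of_getElem? hi
  have hjl := pos_lt_of_getElem? hj
  refine ⟨i, j, adr, hij, ⟨ti, vi, ?_⟩, ⟨tj, vj, ?_⟩, ?_, ?_⟩
  · rw [getElem?_prefix hil]; exact hi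
  · rw [getElem?_prefix hjl]; exact hj
  · rw [nodeAt_prefix hsh hadj hshe hadje hil]; exact hni
  · rw [nodeAt_prefix hsh hadj hshe hadje hjl]; exact hnj

lemma srcRel_mono {m n : Tid × ℕ} (hsh : SCshape σ) (hadj : Adj σ)
    (hshe : SCshape (σ ++ ext)) (hadje : Adj (σ ++ ext))
    (hsrc : srcRel σ m n) : srcRel (σ ++ ext) m n := by
  obtain ⟨pm, t, adr, v, js, t1, v1, hl, hn, hjs_lt, hjs, hms, hmax⟩ :=
    src_structure hsh hadj hsrc
  have hpml := pos_lt_of_getElem? hl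
  have hjsl := pos_lt_of_getElem? hjs
  refine ⟨pm, t, adr, v, ?_, ?_, Or.inr ⟨?_, js, hjs_lt, ⟨t1, v1, ?_⟩, ?_, ?_⟩⟩
  · rw [getElem?_prefix hpml]; exact hl
  · rw [nodeAt_prefix hsh hadj hshe hadje hpml]; exact hn
  · rintro ⟨i, hpend⟩; exact no_pending hshe hadje hpend
  · rw [getElem?_prefix hjsl]; exact hjs
  · rintro j' hj' ⟨t', v', hst'⟩
    rw [getElem?_prefix (by omega)] at hst'
    exact hmax j' hj' ⟨t', v', hst'⟩
  · rw [nodeAt_prefix hsh hadj hshe hadje hjsl]; exact hms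

lemma srcRel_restrict {s m : Tid × ℕ} (hsh : SCshape σ) (hadj : Adj σ)
    (hshe : SCshape (σ ++ ext)) (hadje : Adj (σ ++ ext))
    {pm : ℕ} {tm : Tid} {adrm vm : D} (hload : σ[pm]? = some (.load tm adrm vm))
    (hnm : nodeAt σ pm = some m)
    (hsrc : srcRel (σ ++ ext) s m) : srcRel σ s m := by
  obtain ⟨p', t, adr, v, js, t1, v1, hl', hn', hjs_lt, hjs, hms, hmax⟩ :=
    src_structure hshe hadje hsrc
  have hpml := pos_lt_of_getElem? hload
  have hnme : nodeAt (σ ++ ext) pm = some m := by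
    rw [nodeAt_prefix hsh hadj hshe hadje hpml]; exact hnm
  have hloade : (σ ++ ext)[pm]? = some (.load tm adrm vm) := by
    rw [getElem?_prefix hpml]; exact hload
  have hpe : p' = pm := nodeAt_inj hl' load_not_store hloade load_not_store
    (hn'.trans hnme.symm)
  rw [hpe] at hl' hn' hjs_lt hmax
  rw [hloade] at hl'
  cases hl'
  have hjsl : js < σ.length := by omega
  refine ⟨pm, tm, adrm, vm, hload, hnm, Or.inr ⟨?_, js, hjs_lt, ⟨t1, v1, ?_⟩, ?_, ?_⟩⟩
  · rintro ⟨i, hpend⟩; exact no_pending hsh hadj hpend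
  · rw [← getElem?_prefix (ext := ext) hjsl]; exact hjs
  · rintro j' hj' ⟨t', v', hst'⟩
    refine hmax j' hj' ⟨t', v', ?_⟩
    rw [getElem?_prefix (by omega)]; exact hst'
  · rw [← nodeAt_prefix hsh hadj hshe hadje hjsl]; exact hms

lemma hb_mono (hsh : SCshape σ) (hadj : Adj σ)
    (hshe : SCshape (σ ++ ext)) (hadje : Adj (σ ++ ext)) {m n : Tid × ℕ}
    (h : (traceOf σ).hb m n) : (traceOf (σ ++ ext)).hb m n := by
  rcases h with hpo | hso | hsrc | hcf
  · obtain ⟨hth, hlt, hlen⟩ := hpo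
    exact Or.inl ⟨hth, hlt, lt_of_lt_of_le hlen (threadNodes_length_mono n.1)⟩
  · exact Or.inr (Or.inl (soRel_mono hsh hadj hshe hadje hso))
  · exact Or.inr (Or.inr (Or.inl (srcRel_mono hsh hadj hshe hadje hsrc)))
  · obtain ⟨adr, ⟨tm, vm, hm⟩, ⟨tn, vn, hn⟩, hdisj⟩ := hcf
    have hm' : (threadNodes σ m.1)[m.2]? = some (.load tm adr vm) := hm
    have hn' : (threadNodes σ n.1)[n.2]? = some (.store tn adr vn) := hn
    rcases pos_of_lab hsh hadj hm' with ⟨pm, hrm, hnm, hcm⟩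
    have hload : σ[pm]? = some (.load tm adr vm) := by
      rcases hcm with ⟨h1, _, _, _⟩ | ⟨_, _, ⟨a, v, heq⟩⟩
      · exact h1
      · simp at heq
    have hpml := pos_lt_of_getElem? hload
    rcases pos_of_lab hsh hadj hn' with ⟨pn, hrn, hnn, hcn⟩
    have hstore : σ[pn]? = some (.issue n.1) ∧ σ[pn+1]? = some (.store tn adr vn) := by
      rcases hcn with ⟨_, hns, _, _⟩ | ⟨h1, h2, _⟩
      · simp [Act.isStore] at hns
      · exact ⟨h1, h2⟩
    have hpnl := pos_lt_of_getElem? hstore.1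
    have hpn1l := pos_lt_of_getElem? hstore.2
    have hlabm : (threadNodes (σ ++ ext) m.1)[m.2]? = some (.load tm adr vm) := by
      have hG := threadNodes_label hshe hadje
        (show (σ ++ ext)[pm]? = some (.load tm adr vm) by
          rw [getElem?_prefix hpml]; exact hload)
        (load_not_store (t := tm) (a := adr) (v := vm))
      rw [if_neg (by simp [Act.isIssue])] at hG
      have hth : (Act.load tm adr vm : Act Tid D).thread = m.1 := by
        have h2 := hnm
        rw [nodeAt_nonstore hload load_not_store] at h2
        exact congrArg Prod.fst (Option.some.inj h2)
      rw [hth, rankAt_prefix hpml, hrm] at hG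
      exact hG
    have hlabn : (threadNodes (σ ++ ext) n.1)[n.2]? = some (.store tn adr vn) := by
      have hG := threadNodes_label hshe hadje
        (show (σ ++ ext)[pn]? = some (.issue n.1) by
          rw [getElem?_prefix hpnl]; exact hstore.1)
        (issue_not_store (t := n.1))
      rw [if_pos (by simp [Act.isIssue])] at hG
      have hth : (Act.issue n.1 : Act Tid D).thread = n.1 := rfl
      rw [hth, rankAt_prefix hpnl, hrn, getElem?_prefix hpn1l, hstore.2] at hG
      exact hG
    refine Or.inr (Or.inr (Or.inr ⟨adr, ⟨tm, vm, hlabm⟩, ⟨tn, vn, hlabn⟩, ?_⟩))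
    rcases hdisj with ⟨s, hsrcs, hsos⟩ | hnosrc
    · exact Or.inl ⟨s, srcRel_mono hsh hadj hshe hadje hsrcs,
        soRel_mono hsh hadj hshe hadje hsos⟩
    · refine Or.inr ?_
      rintro ⟨s, hs⟩
      exact hnosrc ⟨s, srcRel_restrict hsh hadj hshe hadje hload hnm hs⟩

end Transfer

section Main

theorem main_aux [Zero D] {P : Program Tid Lbl D} {τ₁ τ₂ : List (Act Tid D)} {a₁ a : Act Tid D}
    (ha : ¬ a.isIssue)
    (h1 : SCComput P (τ₁ ++ a₁ :: τ₂))
    (hhb : ∀ q, τ₁.length < q → q < (τ₁ ++ a₁ :: τ₂).length →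
      ∃ m n, nodeAt (τ₁ ++ a₁ :: τ₂) τ₁.length = some m ∧
             nodeAt (τ₁ ++ a₁ :: τ₂) q = some n ∧
             Relation.ReflTransGen (traceOf (τ₁ ++ a₁ :: τ₂)).hb m n)
    (h2 : SCComput P (τ₁ ++ a₁ :: (τ₂ ++ apnd a))) :
    ((∃ m n, nodeAt (τ₁ ++ a₁ :: (τ₂ ++ apnd a)) τ₁.length = some m ∧
        nodeAt (τ₁ ++ a₁ :: (τ₂ ++ apnd a)) ((τ₁ ++ a₁ :: (τ₂ ++ apnd a)).length - 1) = some n ∧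
        Relation.ReflTransGen (traceOf (τ₁ ++ a₁ :: (τ₂ ++ apnd a))).hb m n) ↔
     ((∃ q x, τ₁.length ≤ q ∧ q < (τ₁ ++ a₁ :: τ₂).length ∧
          (τ₁ ++ a₁ :: τ₂)[q]? = some x ∧ x.thread = a.thread) ∨
      (∃ t' adr v, a = Act.load t' adr v ∧
         ∃ q t'' v'', τ₁.length ≤ q ∧ q < (τ₁ ++ a₁ :: τ₂).length ∧
           (τ₁ ++ a₁ :: τ₂)[q]? = some (Act.store t'' adr v'')) ∨
      (∃ t' adr v, a = Act.store t' adr v ∧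
         ∃ q, τ₁.length ≤ q ∧ q < (τ₁ ++ a₁ :: τ₂).length ∧
           ((∃ t'' v'', (τ₁ ++ a₁ :: τ₂)[q]? = some (Act.load t'' adr v'')) ∨
            (∃ t'' v'', (τ₁ ++ a₁ :: τ₂)[q]? = some (Act.store t'' adr v'')))))) := by
  classical
  have hperm : τ₁ ++ a₁ :: (τ₂ ++ apnd a) = (τ₁ ++ a₁ :: τ₂) ++ apnd a := by simp
  rw [hperm] at h2 ⊢
  set σ := τ₁ ++ a₁ :: τ₂ with hσ
  set L1 := τ₁.length with hL1def
  set L := σ.length with hLdef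
  have hsh : SCshape σ := h1.2
  have hadj : Adj σ := adj_of_scComput h1
  have hshe : SCshape (σ ++ apnd a) := h2.2
  have hadje : Adj (σ ++ apnd a) := adj_of_scComput h2
  have hL1L : L1 < L := by rw [hLdef, hσ]; simp [hL1def]
  have hσL1 : σ[L1]? = some a₁ := by
    rw [hσ, hL1def, List.getElem?_append]
    simp
  have hgetL : ∀ k : ℕ, (σ ++ apnd a)[L + k]? = (apnd a)[k]? := by
    intro k
    rw [List.getElem?_append]
    simp [hLdef]
  have hgetL0 : (σ ++ apnd a)[L]? = (apnd a)[0]? := by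
    have := hgetL 0
    simpa using this
  -- case analysis on the appended action
  have hmain : ∃ x0 : Act Tid D, (σ ++ apnd a)[L]? = some x0 ∧ ¬ x0.isStore ∧
      x0.thread = a.thread ∧
      (((σ ++ apnd a).length - 1 = L ∧ x0 = a ∧ (σ ++ apnd a)[L+1]? = none) ∨
       (∃ t' adr v, a = Act.store t' adr v ∧ x0 = Act.issue t' ∧
         (σ ++ apnd a)[L+1]? = some a ∧ (σ ++ apnd a).length - 1 = L + 1)) := by
    rcases a with t' | ⟨t', adr, v⟩ | ⟨t', adr, v⟩ | t'
    · simp [Act.isIssue] at ha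
    · -- store
      refine ⟨Act.issue t', by rw [hgetL0]; rfl, issue_not_store, rfl, Or.inr
        ⟨t', adr, v, rfl, rfl, ?_, ?_⟩⟩
      · have := hgetL 1; rw [this]; rfl
      · simp [apnd, hLdef]
    · refine ⟨Act.load t' adr v, by rw [hgetL0]; rfl, load_not_store, rfl,
        Or.inl ⟨by simp [apnd, hLdef], rfl, ?_⟩⟩
      have := hgetL 1; rw [this]; rfl
    · refine ⟨Act.loc t', by rw [hgetL0]; rfl, by simp [Act.isStore], rfl,
        Or.inl ⟨by simp [apnd, hLdef], rfl, ?_⟩⟩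
      have := hgetL 1; rw [this]; rfl
  obtain ⟨x0, hx0, hx0s, hx0th, hbr⟩ := hmain
  -- the node of the appended action
  have hnAL : nodeAt (σ ++ apnd a) L = some (a.thread, rankAt (σ ++ apnd a) L) := by
    rw [nodeAt_nonstore hx0 hx0s, hx0th]
  have hAnchA : AnchAt (σ ++ apnd a) L (a.thread, rankAt (σ ++ apnd a) L) :=
    ⟨hnAL, x0, hx0, hx0s⟩
  have hnALast : nodeAt (σ ++ apnd a) ((σ ++ apnd a).length - 1) =
      some (a.thread, rankAt (σ ++ apnd a) L) := by
    rcases hbr with ⟨hlen, _, _⟩ | ⟨t', adr, v, hae, hx0e, hst, hlen⟩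
    · rw [hlen]; exact hnAL
    · rw [hlen]
      have hsteq : (σ ++ apnd a)[L+1]? = some (Act.store t' adr v) := by rw [hst, hae]
      obtain ⟨_, _, hnode, _⟩ := nodeAt_store hshe hadje hsteq
      rw [hnode]
      have : L + 1 - 1 = L := by omega
      rw [this]
      have : t' = a.thread := by rw [hae]; rfl
      rw [this]
  have hrankLen : rankAt (σ ++ apnd a) L < (threadNodes (σ ++ apnd a) a.thread).length := by
    rw [threadNodes_length, rankAt_eq hx0, hx0th]
    have h1' : cntP (σ ++ apnd a) (fun y => y.thread = a.thread ∧ ¬ y.isStore) (L+1) =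
        cntP (σ ++ apnd a) (fun y => y.thread = a.thread ∧ ¬ y.isStore) L + 1 := by
      rw [cntP_succ_of_getElem hx0, if_pos ⟨hx0th, hx0s⟩]
    have h2' : L + 1 ≤ (σ ++ apnd a).length := by
      have := pos_lt_of_getElem? hx0
      omega
    have h3' := cntP_mono (τ := σ ++ apnd a)
      (fun y => y.thread = a.thread ∧ ¬ y.isStore) h2'
    omega
  have hLlt : L < (σ ++ apnd a).length := pos_lt_of_getElem? hx0
  have hnePrefix : ∀ q, q < L → (σ ++ apnd a)[q]? = σ[q]? := fun q hq => getElem?_prefix hq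
  have hnodePrefix : ∀ q, q < L → nodeAt (σ ++ apnd a) q = nodeAt σ q :=
    fun q hq => nodeAt_prefix hsh hadj hshe hadje hq
  constructor
  · -- forward
    rintro ⟨m, n, hm, hn, hrtg⟩
    have hnnA : n = (a.thread, rankAt (σ ++ apnd a) L) :=
      Option.some.inj (hn.symm.trans hnALast)
    subst hnnA
    obtain ⟨p0, hA0, hp0le, hp0ge⟩ := anch_of_nodeAt hshe hadje hm
    rcases Relation.ReflTransGen.cases_tail hrtg with heq | ⟨x, hrtg', hedge⟩
    · exfalso
      rw [heq] at hAnchA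
      have := anch_unique hA0 hAnchA
      omega
    · obtain ⟨px, qx, hAx, hAn2, hpxqx⟩ := hb_anch hshe hadje hedge
      have hqx : qx = L := anch_unique hAn2 hAnchA
      have hp0px : p0 ≤ px := rtg_anch hshe hadje hrtg' hA0 px hAx
      have hpxL : px < L := by omega
      have hdich : L1 ≤ px ∨ (px + 1 = L1 ∧ x = m ∧
          ∃ t₁ adr₁ v₁, a₁ = Act.store t₁ adr₁ v₁ ∧
            (σ ++ apnd a)[px]? = some (Act.issue t₁)) := by
        by_cases hge : L1 ≤ px
        · exact Or.inl hge
        · right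
          have hp0e : p0 = px ∧ px = L1 - 1 ∧ 1 ≤ L1 := by omega
          obtain ⟨hp0px', hpxe, hL1pos⟩ := hp0e
          have hxm : x = m := by
            have h1' := hAx.1
            have h2' := hA0.1
            rw [← hp0px'] at h1'
            exact Option.some.inj (h1'.symm.trans h2')
          have ha₁s : a₁.isStore := by
            by_contra hns
            have hσeL1 : (σ ++ apnd a)[L1]? = some a₁ := by
              rw [hnePrefix L1 hL1L]; exact hσL1
            have : AnchAt (σ ++ apnd a) L1 m := ⟨hm, a₁, hσeL1, hns⟩
            have := anch_unique hA0 this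
            omega
          rcases a₁ with t₁ | ⟨t₁, adr₁, v₁⟩ | ⟨t₁, adr₁, v₁⟩ | t₁ <;>
            simp [Act.isStore] at ha₁s
          have hσeL1 : (σ ++ apnd a)[L1]? = some (Act.store t₁ adr₁ v₁) := by
            rw [hnePrefix L1 hL1L]; exact hσL1
          obtain ⟨_, hiss, _, _⟩ := nodeAt_store hshe hadje hσeL1
          refine ⟨by omega, hxm, t₁, adr₁, v₁, rfl, ?_⟩
          have : L1 - 1 = px := by omega
          rw [← this]
          exact hiss
      rcases hedge with hpo | hso | hsrc | hcf
      · -- program order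
        obtain ⟨hth1, hlt1, _⟩ := hpo
        obtain ⟨hnx, xa, hxa, hxas⟩ := hAx
        have hxath : xa.thread = x.1 := by
          rw [nodeAt_nonstore hxa hxas] at hnx
          exact congrArg Prod.fst (Option.some.inj hnx)
        rcases hdich with hge | ⟨hpx1, hxm, t₁, adr₁, v₁, ha₁e, hpxiss⟩
        · refine Or.inl ⟨px, xa, hge, hpxL, ?_, hxath.trans hth1⟩
          rw [← hnePrefix px hpxL]; exact hxa
        · have hxa_iss : xa = Act.issue t₁ := Option.some.inj (hxa.symm.trans hpxiss)
          have ht₁ : t₁ = a.thread := by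
            rw [hxa_iss] at hxath
            exact hxath.trans hth1
          refine Or.inl ⟨L1, a₁, le_rfl, hL1L, hσL1, ?_⟩
          rw [ha₁e]
          exact ht₁
      · -- store order
        obtain ⟨i, j, adr0, hij, ⟨ti, vi, hi⟩, ⟨tj, vj, hj⟩, hni, hnj⟩ := hso
        obtain ⟨hj0, hjiss, hjnode, hjnode'⟩ := nodeAt_store hshe hadje hj
        have hAj : AnchAt (σ ++ apnd a) (j-1) (a.thread, rankAt (σ ++ apnd a) L) :=
          ⟨hjnode'.trans (hjnode.symm.trans hnj), _, hjiss, issue_not_store⟩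
        have hjL : j - 1 = L := anch_unique hAj hAnchA
        have hje : j = L + 1 := by omega
        rcases hbr with ⟨_, _, hnone⟩ | ⟨t', adr, v, hae, hx0e, hstL1, _⟩
        · rw [hje, hnone] at hj
          simp at hj
        · rw [hje, hstL1, hae] at hj
          have hjeq := Option.some.inj hj
          injection hjeq with e1 e2 e3
          obtain ⟨hi0, hiiss, hinode, hinode'⟩ := nodeAt_store hshe hadje hi
          have hAi : AnchAt (σ ++ apnd a) (i-1) x :=
            ⟨hinode'.trans (hinode.symm.trans hni), _, hiiss, issue_not_store⟩
          have hieq : i - 1 = px := anch_unique hAi hAx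
          have hiL : i < L := by
            by_contra hcon
            have : i = L := by omega
            rw [this, hx0] at hi
            have := Option.some.inj hi
            rw [this] at hx0s
            simp [Act.isStore] at hx0s
          rcases hdich with hge | ⟨hpx1, hxm, t₁, adr₁, v₁, ha₁e, hpxiss⟩
          · refine Or.inr (Or.inr ⟨t', adr, v, hae, i, by omega, hiL, Or.inr ⟨ti, vi, ?_⟩⟩)
            rw [e2, ← hnePrefix i hiL]; exact hi
          · have hiL1 : i = L1 := by omega
            refine Or.inr (Or.inr ⟨t', adr, v, hae, L1, le_rfl, hL1L, Or.inr ⟨ti, vi, ?_⟩⟩)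
            rw [e2, ← hiL1, ← hnePrefix i hiL]; exact hi
      · -- source
        obtain ⟨pm, t, adr0, v0, js, t1, v1, hl, hn', hjs_lt, hjs, hms, hmax⟩ :=
          src_structure hshe hadje hsrc
        have hApm : AnchAt (σ ++ apnd a) pm (a.thread, rankAt (σ ++ apnd a) L) :=
          ⟨hn', _, hl, load_not_store⟩
        have hpmL : pm = L := anch_unique hApm hAnchA
        rw [hpmL, hx0] at hl
        have hx0e := Option.some.inj hl
        rcases hbr with ⟨_, hx0a, _⟩ | ⟨t', adr, v, hae, hx0iss, _, _⟩
        · have hae : a = Act.load t adr0 v0 := by rw [← hx0a]; exact hx0e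
          obtain ⟨hjs0, hjsiss, hjsnode, hjsnode'⟩ := nodeAt_store hshe hadje hjs
          have hAjs : AnchAt (σ ++ apnd a) (js-1) x :=
            ⟨hjsnode'.trans (hjsnode.symm.trans hms), _, hjsiss, issue_not_store⟩
          have hjseq : js - 1 = px := anch_unique hAjs hAx
          have hjsL : js < L := by omega
          rcases hdich with hge | ⟨hpx1, hxm, t₁, adr₁, v₁, ha₁e, hpxiss⟩
          · refine Or.inr (Or.inl ⟨t, adr0, v0, hae, js, t1, v1, by omega, hjsL, ?_⟩)
            rw [← hnePrefix js hjsL]; exact hjs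
          · have hjsL1 : js = L1 := by omega
            refine Or.inr (Or.inl ⟨t, adr0, v0, hae, L1, t1, v1, le_rfl, hL1L, ?_⟩)
            rw [← hjsL1, ← hnePrefix js hjsL]; exact hjs
        · rw [hx0iss] at hx0e
          simp at hx0e
      · -- conflict
        obtain ⟨adr0, ⟨tm2, vm2, hlm⟩, ⟨tn2, vn2, hln⟩, hdisj⟩ := hcf
        rcases pos_of_lab hshe hadje
          (show (threadNodes (σ ++ apnd a) a.thread)[rankAt (σ ++ apnd a) L]? =
            some (.store tn2 adr0 vn2) from hln) with ⟨pn, hrn, hnn, hcn⟩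
        have hpnfacts : (σ ++ apnd a)[pn]? = some (Act.issue a.thread) ∧
            (σ ++ apnd a)[pn+1]? = some (Act.store tn2 adr0 vn2) := by
          rcases hcn with ⟨_, hns, _, _⟩ | ⟨hh1, hh2, _⟩
          · simp [Act.isStore] at hns
          · exact ⟨hh1, hh2⟩
        have hApn : AnchAt (σ ++ apnd a) pn (a.thread, rankAt (σ ++ apnd a) L) :=
          ⟨hnn, _, hpnfacts.1, issue_not_store⟩
        have hpnL : pn = L := anch_unique hApn hAnchA
        have hpn1 := hpnfacts.2
        rw [hpnL] at hpn1
        rcases hbr with ⟨_, _, hnone⟩ | ⟨t', adr, v, hae, _, hstL1, _⟩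
        · rw [hnone] at hpn1
          simp at hpn1
        · rw [hstL1, hae] at hpn1
          have hpn1eq := Option.some.inj hpn1
          injection hpn1eq with e1 e2 e3
          rcases pos_of_lab hshe hadje
            (show (threadNodes (σ ++ apnd a) x.1)[x.2]? = some (.load tm2 adr0 vm2)
              from hlm) with ⟨pxx, hrx, hnx, hcx⟩
          have hpxxload : (σ ++ apnd a)[pxx]? = some (.load tm2 adr0 vm2) := by
            rcases hcx with ⟨hh, _, _, _⟩ | ⟨_, _, ⟨aa, vv, heq⟩⟩
            · exact hh
            · simp at heq
          have hApxx : AnchAt (σ ++ apnd a) pxx x := ⟨hnx, _, hpxxload, load_not_store⟩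
          have hpxx : pxx = px := anch_unique hApxx hAx
          rcases hdich with hge | ⟨hpx1, hxm, t₁, adr₁, v₁, ha₁e, hpxiss⟩
          · refine Or.inr (Or.inr ⟨t', adr, v, hae, px, hge, hpxL, Or.inl ⟨tm2, vm2, ?_⟩⟩)
            rw [e2, ← hnePrefix px hpxL, ← hpxx]; exact hpxxload
          · rw [hpxx, hpxiss] at hpxxload
            simp at hpxxload
  · -- backward
    intro hcases
    obtain ⟨m, hm⟩ := nodeAt_some hshe hadje (show L1 < (σ ++ apnd a).length by omega)
    refine ⟨m, (a.thread, rankAt (σ ++ apnd a) L), hm, hnALast, ?_⟩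
    have hchain : ∀ q mq, L1 ≤ q → q < L → nodeAt (σ ++ apnd a) q = some mq →
        Relation.ReflTransGen (traceOf (σ ++ apnd a)).hb m mq := by
      intro q mq hq1 hq2 hmq
      rcases eq_or_lt_of_le hq1 with heq | hlt
      · have hmeq : mq = m := by
          rw [heq] at hm
          exact Option.some.inj (hmq.symm.trans hm)
        rw [hmeq]
      · obtain ⟨m', n', hm', hn', hr⟩ := hhb q hlt hq2
        have hm'm : m' = m := by
          rw [← hnodePrefix L1 hL1L] at hm'
          exact Option.some.inj (hm'.symm.trans hm)
        have hn'mq : n' = mq := by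
          rw [← hnodePrefix q hq2] at hn'
          exact Option.some.inj (hn'.symm.trans hmq)
        rw [← hm'm, ← hn'mq]
        exact Relation.ReflTransGen.mono
          (fun u w (huw : (traceOf σ).hb u w) => hb_mono hsh hadj hshe hadje huw) _ _ hr
    rcases hcases with ⟨q, x, hq1, hq2, hqx, hth⟩ |
      ⟨t', adr, v, hae, q, t'', v'', hq1, hq2, hqs⟩ |
      ⟨t', adr, v, hae, q, hq1, hq2, hqlv⟩
    · -- (i): program order edge
      have hqxe : (σ ++ apnd a)[q]? = some x := by rw [hnePrefix q hq2]; exact hqx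
      by_cases hxs : x.isStore
      · rcases x with tx | ⟨tx, ax, vx⟩ | ⟨tx, ax, vx⟩ | tx <;> simp [Act.isStore] at hxs
        obtain ⟨hq0, hqiss, hqnode, hqnode'⟩ := nodeAt_store hshe hadje hqxe
        refine Relation.ReflTransGen.tail (hchain q _ hq1 hq2 hqnode) ?_
        refine Or.inl ⟨hth, ?_, hrankLen⟩
        exact rank_lt_of_lt hqiss issue_not_store hx0
          (show tx = x0.thread by rw [hx0th]; exact hth) (by omega)
      · refine Relation.ReflTransGen.tail
          (hchain q _ hq1 hq2 (nodeAt_nonstore hqxe hxs)) ?_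
        refine Or.inl ⟨hth, ?_, hrankLen⟩
        exact rank_lt_of_lt hqxe hxs hx0 (by rw [hx0th]; exact hth) hq2
    · -- (ii): a is a load
      subst hae
      rcases hbr with ⟨_, hx0a, _⟩ | ⟨t'2, adr2, v2, habs, _, _, _⟩
      · have hlL : (σ ++ apnd (Act.load t' adr v))[L]? = some (Act.load t' adr v) := by
          rw [hx0, hx0a]
        have hqse : (σ ++ apnd (Act.load t' adr v))[q]? = some (.store t'' adr v'') := by
          rw [hnePrefix q hq2]; exact hqs
        obtain ⟨s, js, t1, v1, hqjs, hjsL, hjs, hnode_s, hsrc⟩ :=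
          exists_src hshe hadje hlL hqse hq2
        by_cases hqjs_eq : q = js
        · have hqnode : nodeAt (σ ++ apnd (Act.load t' adr v)) q = some s := by
            rw [hqjs_eq]; exact hnode_s
          exact Relation.ReflTransGen.tail (hchain q s hq1 hq2 hqnode)
            (Or.inr (Or.inr (Or.inl hsrc)))
        · have hqlt : q < js := by omega
          obtain ⟨mq, hmq⟩ := nodeAt_some hshe hadje
            (show q < (σ ++ apnd (Act.load t' adr v)).length by omega)
          refine Relation.ReflTransGen.tail (Relation.ReflTransGen.tail
            (hchain q mq hq1 hq2 hmq) ?_) (Or.inr (Or.inr (Or.inl hsrc)))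
          exact Or.inr (Or.inl ⟨q, js, adr, hqlt, ⟨t'', v'', hqse⟩, ⟨t1, v1, hjs⟩,
            hmq, hnode_s⟩)
      · simp at habs
    · -- (iii): a is a store
      subst hae
      rcases hbr with ⟨_, habs, _⟩ | ⟨t'2, adr2, v2, heq2, hx0iss, hstL1, hlen2⟩
      · rw [habs] at hx0s
        simp [Act.isStore] at hx0s
      · injection heq2 with f1 f2 f3
        subst f1; subst f2; subst f3
        have hissL : (σ ++ apnd (Act.store t' adr v))[L]? = some (Act.issue t') := by
          rw [hx0, hx0iss]
        have hnALp1 : nodeAt (σ ++ apnd (Act.store t' adr v)) (L+1) =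
            some ((Act.store t' adr v : Act Tid D).thread,
              rankAt (σ ++ apnd (Act.store t' adr v)) L) := by
          obtain ⟨_, _, hnode, _⟩ := nodeAt_store hshe hadje hstL1
          exact hnode
        rcases hqlv with ⟨t'', v'', hql⟩ | ⟨t'', v'', hqs⟩
        · -- load at q: conflict edge
          have hqle : (σ ++ apnd (Act.store t' adr v))[q]? = some (Act.load t'' adr v'') := by
            rw [hnePrefix q hq2]; exact hql
          have hmq := nodeAt_nonstore hqle load_not_store
          refine Relation.ReflTransGen.tail (hchain q _ hq1 hq2 hmq) ?_
          refine Or.inr (Or.inr (Or.inr ⟨adr, ⟨t'', v'', ?_⟩, ⟨t', v, ?_⟩, ?_⟩))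
          · have hG := threadNodes_label hshe hadje hqle load_not_store
            rw [if_neg (by simp [Act.isIssue])] at hG
            exact hG
          · have hG := threadNodes_label hshe hadje hissL issue_not_store
            rw [if_pos (by simp [Act.isIssue])] at hG
            rw [hstL1] at hG
            exact hG
          · by_cases hex : ∃ (j0 : ℕ) (t0 : Tid) (v0 : D), j0 < q ∧
                (σ ++ apnd (Act.store t' adr v))[j0]? = some (Act.store t0 adr v0)
            · obtain ⟨j0, t0, v0, hj0q, hj0⟩ := hex
              obtain ⟨s', js', t1', v1', _, hjs'q, hjs', hnode_s', hsrc'⟩ :=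
                exists_src hshe hadje hqle hj0 hj0q
              refine Or.inl ⟨s', hsrc', ?_⟩
              exact ⟨js', L+1, adr, by omega, ⟨t1', v1', hjs'⟩, ⟨t', v, hstL1⟩,
                hnode_s', hnALp1⟩
            · refine Or.inr ?_
              rintro ⟨s', hs'⟩
              obtain ⟨pm', tt, adr'', vv, js'', t1'', v1'', hl'', hn'', hjs''lt,
                hjs'', _, _⟩ := src_structure hshe hadje hs'
              have hpm'q : pm' = q := nodeAt_inj hl'' load_not_store hqle
                load_not_store (hn''.trans hmq.symm)
              rw [hpm'q, hqle] at hl''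
              have hl''eq := Option.some.inj hl''
              injection hl''eq with g1 g2 g3
              exact hex ⟨js'', t1'', v1'', by omega, by subst g2; exact hjs''⟩
        · -- store at q: store order edge
          have hqse : (σ ++ apnd (Act.store t' adr v))[q]? = some (Act.store t'' adr v'') := by
            rw [hnePrefix q hq2]; exact hqs
          obtain ⟨_, _, hqnode, _⟩ := nodeAt_store hshe hadje hqse
          refine Relation.ReflTransGen.tail (hchain q _ hq1 hq2 hqnode) ?_
          exact Or.inr (Or.inl ⟨q, L+1, adr, by omega, ⟨t'', v'', hqse⟩,
            ⟨t', v, hstL1⟩, hqnode, hnALp1⟩)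

end Main

/-- Let `τ = τ₁·a₁·τ₂` be an SC computation of a parallel
program `P` such that `a₁ hb* a₂` for every action `a₂` in `τ₂`, and suppose
`τ·a` is also an SC computation of `P`.  Then `a₁ hb* a` in `Tr(τ·a)` if and
only if (i) some action in `a₁·τ₂` belongs to the same thread as `a`, or (ii)
`a` is a load whose address is stored by some action in `a₁·τ₂`, or (iii) `a`
is a store (with its issue) whose address is loaded or stored by some action
in `a₁·τ₂`. -/
theorem hb_extension_characterization {Tid Lbl D : Type} [Zero D]
    (P : Program Tid Lbl D) (τ₁ τ₂ : List (Act Tid D)) (a₁ a : Act Tid D)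
    (ha : ¬ a.isIssue)
    (h1 : SCComput P (τ₁ ++ a₁ :: τ₂))
    (hhb : ∀ q, τ₁.length < q → q < (τ₁ ++ a₁ :: τ₂).length →
      ∃ m n, nodeAt (τ₁ ++ a₁ :: τ₂) τ₁.length = some m ∧
             nodeAt (τ₁ ++ a₁ :: τ₂) q = some n ∧
             Relation.ReflTransGen (traceOf (τ₁ ++ a₁ :: τ₂)).hb m n)
    (h2 : SCComput P (τ₁ ++ a₁ :: (τ₂ ++ apnd a))) :
    (let τ := τ₁ ++ a₁ :: τ₂
     let τe := τ₁ ++ a₁ :: (τ₂ ++ apnd a)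
     (∃ m n, nodeAt τe τ₁.length = some m ∧
        nodeAt τe (τe.length - 1) = some n ∧
        Relation.ReflTransGen (traceOf τe).hb m n) ↔
     ((∃ q x, τ₁.length ≤ q ∧ q < τ.length ∧ τ[q]? = some x ∧ x.thread = a.thread) ∨
      (∃ t' adr v, a = Act.load t' adr v ∧
         ∃ q t'' v'', τ₁.length ≤ q ∧ q < τ.length ∧
           τ[q]? = some (Act.store t'' adr v'')) ∨
      (∃ t' adr v, a = Act.store t' adr v ∧
         ∃ q, τ₁.length ≤ q ∧ q < τ.length ∧
           ((∃ t'' v'', τ[q]? = some (Act.load t'' adr v'')) ∨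
            (∃ t'' v'', τ[q]? = some (Act.store t'' adr v'')))))) := by
  exact main_aux ha h1 hhb h2

end

end TSORob
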